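/- arXiv:2504.19717 — 6 statements merged into one kernel-verified Lean document; each statement's English description precedes it below -/
import Mathlib

section
/- Let N and M be positive integers, let μ = Σ_{j=1}^{m} w_j δ_{p_j} be a probability measure on ℝ^N with finite support (so w_j > 0, Σ_j w_j = 1, and the points p_j ∈ ℝ^N are distinct), and let g_1, …, g_M : ℝ^N → ℝ be functions. Then there exists a probability measure μ̃ = Σ_{j=1}^{m} w̃_j δ_{p_j} with w̃_j ≥ 0 such that: (i) the support of μ̃ is contained in the support of μ; (ii) ∫ g_i dμ̃ = ∫ g_i dμ for every i = 1, …, M; and (iii) the cardinality of the support of μ̃ is at most M + 1. -/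
/-- **Existence of a reduced measure** (Statement 0).
Given a discrete probability measure `μ = Σ_j w_j δ_{p_j}` on `ℝ^N` with finite support
(distinct points `p_j`, positive weights summing to `1`) and test functions
`g_1, …, g_M : ℝ^N → ℝ`, there exists a probability measure `μ̃ = Σ_j w̃_j δ_{p_j}`
with nonnegative weights such that (i) its support is contained in that of `μ`,
(ii) all integrals of the test functions are preserved, and (iii) the cardinality of
its support is at most `M + 1`. -/
theorem reduced_measure_exists
    (N M m : ℕ) (hN : 0 < N) (hM : 0 < M) (hm : 0 < m)
    (p : Fin m → EuclideanSpace ℝ (Fin N)) (hp : Function.Injective p)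
    (w : Fin m → ℝ) (hw : ∀ j, 0 < w j) (hwsum : ∑ j, w j = 1)
    (g : Fin M → EuclideanSpace ℝ (Fin N) → ℝ) :
    ∃ w' : Fin m → ℝ,
      (∀ j, 0 ≤ w' j) ∧
      (∑ j, w' j = 1) ∧
      (∀ j, w' j ≠ 0 → w j ≠ 0) ∧
      (∀ i, ∑ j, w' j * g i (p j) = ∑ j, w j * g i (p j)) ∧
      (Finset.univ.filter fun j => w' j ≠ 0).card ≤ M + 1 := by
  classical
  set v : Fin m → (Fin M → ℝ) := fun j i => g i (p j) with hv
  set x : Fin M → ℝ := ∑ j, w j • v j with hx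
  have hxmem : x ∈ convexHull ℝ (Set.range v) := by
    have := Finset.centerMass_mem_convexHull (Finset.univ : Finset (Fin m))
      (w := w) (z := v) (fun i _ => (hw i).le) (by rw [hwsum]; norm_num)
      (fun i _ => Set.mem_range_self i)
    rwa [Finset.centerMass_eq_of_sum_1 _ _ hwsum] at this
  obtain ⟨ι, hfin, z, u, hrange, hai, hupos, husum, huz⟩ :=
    eq_pos_convex_span_of_mem_convexHull hxmem
  -- card bound on ι
  have hcard : Fintype.card ι ≤ M + 1 := by
    have h1 := hai.card_le_finrank_succ
    have h2 : Module.finrank ℝ (vectorSpan ℝ (Set.range z)) ≤ M := by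
      have := Submodule.finrank_le (vectorSpan ℝ (Set.range z))
      simpa [Module.finrank_fintype_fun_eq_card] using this
    omega
  -- choose representative indices
  have hchoice : ∀ i : ι, ∃ j : Fin m, v j = z i := fun i => hrange ⟨i, rfl⟩
  choose c hc using hchoice
  refine ⟨fun j => ∑ i ∈ Finset.univ.filter (fun i => c i = j), u i,
    ?_, ?_, fun j _ => (hw j).ne', ?_, ?_⟩
  · intro j
    exact Finset.sum_nonneg fun i _ => (hupos i).le
  · rw [Finset.sum_fiberwise Finset.univ c u, husum]
  · intro i
    have hL : ∀ j, (∑ k ∈ Finset.univ.filter (fun k => c k = j), u k) * g i (p j)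
        = ∑ k ∈ Finset.univ.filter (fun k => c k = j), u k * z k i := by
      intro j
      rw [Finset.sum_mul]
      refine Finset.sum_congr rfl fun k hk => ?_
      have : c k = j := (Finset.mem_filter.mp hk).2
      have : z k i = g i (p j) := by rw [← hc k, this]
      rw [this]
    calc ∑ j, (∑ k ∈ Finset.univ.filter (fun k => c k = j), u k) * g i (p j)
        = ∑ j, ∑ k ∈ Finset.univ.filter (fun k => c k = j), u k * z k i := by
          exact Finset.sum_congr rfl fun j _ => hL j
      _ = ∑ k, u k * z k i := Finset.sum_fiberwise Finset.univ c _
      _ = x i := by rw [← huz]; simp [Finset.sum_apply]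
      _ = ∑ j, w j * g i (p j) := by simp [hx, Finset.sum_apply, hv]
  · calc (Finset.univ.filter fun j =>
          (∑ i ∈ Finset.univ.filter (fun i => c i = j), u i) ≠ 0).card
        ≤ (Finset.univ.image c).card := by
          apply Finset.card_le_card
          intro j hj
          rw [Finset.mem_filter] at hj
          obtain ⟨k, hk⟩ : ∃ k, c k = j := by
            by_contra h
            push_neg at h
            apply hj.2
            rw [Finset.filter_false_of_mem (fun k _ => h k), Finset.sum_empty]
          exact Finset.mem_image.mpr ⟨k, Finset.mem_univ k, hk⟩
      _ ≤ Fintype.card ι := by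
          simpa using Finset.card_image_le (s := Finset.univ) (f := c)
      _ ≤ M + 1 := hcard
end

section
/- Let A be a real M × n matrix and let β ∈ ℝ^n have all coordinates nonnegative. Then there exists β′ ∈ ℝ^n with all coordinates nonnegative such that A β′ = A β and the number of nonzero coordinates of β′ is at most rank(A). -/
open Finset

lemma mulVec_eq_sum_cols (M n : ℕ) (A : Matrix (Fin M) (Fin n) ℝ) (v : Fin n → ℝ) :
    A.mulVec v = ∑ j : Fin n, v j • (fun i => A i j) := by
  ext i
  simp [Matrix.mulVec, dotProduct, Finset.sum_apply, mul_comm]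

lemma reduce_aux (M n : ℕ) (A : Matrix (Fin M) (Fin n) ℝ) :
    ∀ k, ∀ β : Fin n → ℝ, (∀ j, 0 ≤ β j) →
      (Finset.univ.filter fun j => β j ≠ 0).card ≤ k →
      ∃ β' : Fin n → ℝ,
        (∀ j, 0 ≤ β' j) ∧
        A.mulVec β' = A.mulVec β ∧
        (Finset.univ.filter fun j => β' j ≠ 0).card ≤ A.rank := by
  intro k
  induction k using Nat.strong_induction_on with
  | _ k ih =>
  intro β hβ hcard
  set S := Finset.univ.filter fun j => β j ≠ 0 with hS
  by_cases hle : S.card ≤ A.rank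
  · exact ⟨β, hβ, rfl, hle⟩
  push_neg at hle
  -- columns of A indexed by S, living in the range of mulVecLin
  set R := LinearMap.range A.mulVecLin with hR
  have hfin : FiniteDimensional ℝ R := inferInstance
  have hcol : ∀ j : Fin n, (fun i => A i j) ∈ R := by
    intro j
    exact ⟨Pi.single j 1, by simp [Matrix.mulVecLin]; rfl⟩
  set w : S → R := fun j => ⟨fun i => A i j.1, hcol j.1⟩ with hw
  have hnli : ¬ LinearIndependent ℝ w := by
    intro h
    have := h.fintype_card_le_finrank
    rw [Fintype.card_coe] at this
    exact absurd (this.trans_eq rfl) (by simpa [Matrix.rank] using hle.not_ge)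
  rw [Fintype.not_linearIndependent_iff] at hnli
  obtain ⟨g, hg0, j₁, hj₁⟩ := hnli
  -- produce a combination with a positive coefficient
  obtain ⟨g, hg0, j₁, hj₁⟩ : ∃ g : S → ℝ, (∑ j, g j • w j = 0) ∧ ∃ j, 0 < g j := by
    rcases hj₁.lt_or_gt with h | h
    · refine ⟨-g, ?_, j₁, by simpa using h⟩
      rw [← neg_zero, ← hg0, ← Finset.sum_neg_distrib]
      exact Finset.sum_congr rfl fun x _ => by rw [Pi.neg_apply]; exact neg_smul (g x) (w x)
    · exact ⟨g, hg0, j₁, h⟩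
  -- extend g to c on Fin n
  classical
  set c : Fin n → ℝ := fun j => if h : j ∈ S then g ⟨j, h⟩ else 0 with hc
  have hcS : ∀ j ∉ S, c j = 0 := by intro j hj; simp [hc, hj]
  have hAc : A.mulVec c = 0 := by
    have hsum : ∑ j : Fin n, c j • (fun i => A i j) = (0 : Fin M → ℝ) := by
      rw [← Finset.sum_subset (Finset.subset_univ S)]
      · have := congrArg (Submodule.subtype R) hg0
        simp only [map_sum, map_smul, map_zero] at this
        rw [← Finset.sum_attach S (fun j => c j • (fun i => A i j))]
        convert this using 1
        refine Finset.sum_congr rfl fun j _ => ?_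
        simp [hc, j.2, hw]
      · intro j _ hj
        simp [hcS j hj]
    rw [mulVec_eq_sum_cols, hsum]
  -- pick the minimizing index
  set T := S.filter fun j => 0 < c j with hT
  have hj₁S : (j₁ : Fin n) ∈ S := j₁.2
  have hcj₁ : 0 < c j₁ := by simpa [hc, j₁.2] using hj₁
  have hTne : T.Nonempty := ⟨j₁, Finset.mem_filter.mpr ⟨hj₁S, hcj₁⟩⟩
  obtain ⟨j₀, hj₀T, hj₀min⟩ := Finset.exists_min_image T (fun j => β j / c j) hTne
  have hj₀S : j₀ ∈ S := (Finset.mem_filter.mp hj₀T).1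
  have hcj₀ : 0 < c j₀ := (Finset.mem_filter.mp hj₀T).2
  set t := β j₀ / c j₀ with ht
  have ht0 : 0 ≤ t := div_nonneg (hβ j₀) hcj₀.le
  set β'' : Fin n → ℝ := fun j => β j - t * c j with hβ''
  have hβ''nn : ∀ j, 0 ≤ β'' j := by
    intro j
    by_cases hcj : 0 < c j
    · by_cases hjS : j ∈ S
      · have : t ≤ β j / c j := hj₀min j (Finset.mem_filter.mpr ⟨hjS, hcj⟩)
        have := (le_div_iff₀ hcj).mp this
        simp only [hβ'']; linarith
      · have : β j = 0 := by
          have := Finset.mem_filter.not.mp hjS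
          push_neg at this
          simpa using this (Finset.mem_univ j)
        rw [hcS j hjS] at hcj; exact absurd hcj (lt_irrefl 0)
    · push_neg at hcj
      have : 0 ≤ -(t * c j) := by nlinarith
      simp only [hβ'']; linarith [hβ j]
  have hβ''j₀ : β'' j₀ = 0 := by
    simp only [hβ'', ht]
    field_simp
    ring
  have hmv : A.mulVec β'' = A.mulVec β := by
    have : β'' = β - t • c := by funext j; simp [hβ'', smul_eq_mul]
    rw [this, Matrix.mulVec_sub, Matrix.mulVec_smul, hAc]
    simp
  have hsub : (Finset.univ.filter fun j => β'' j ≠ 0) ⊆ S.erase j₀ := by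
    intro j hj
    simp only [Finset.mem_filter, Finset.mem_univ, true_and] at hj
    refine Finset.mem_erase.mpr ⟨?_, ?_⟩
    · rintro rfl; exact hj hβ''j₀
    · by_contra hjS
      have hb : β j = 0 := by
        have := Finset.mem_filter.not.mp hjS
        push_neg at this
        simpa using this (Finset.mem_univ j)
      exact hj (by simp [hβ'', hb, hcS j hjS])
  have hcard'' : (Finset.univ.filter fun j => β'' j ≠ 0).card ≤ S.card - 1 := by
    calc _ ≤ (S.erase j₀).card := Finset.card_le_card hsub
    _ = S.card - 1 := Finset.card_erase_of_mem hj₀S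
  have hlt : S.card - 1 < k := by
    have h1 : 1 ≤ S.card := Finset.card_pos.mpr ⟨j₀, hj₀S⟩
    omega
  obtain ⟨β', h1, h2, h3⟩ := ih (S.card - 1) hlt β'' hβ''nn hcard''
  exact ⟨β', h1, h2.trans hmv, h3⟩

/-- **Linear-algebraic form of measure reduction** (Statement 1).
For a real `M × n` matrix `A` and a vector `β ∈ ℝ^n` with nonnegative coordinates,
there exists a nonnegative vector `β'` with `A β' = A β` whose number of nonzero
coordinates is at most `rank A`. -/
theorem reduced_weights_exists
    (M n : ℕ) (A : Matrix (Fin M) (Fin n) ℝ)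
    (β : Fin n → ℝ) (hβ : ∀ j, 0 ≤ β j) :
    ∃ β' : Fin n → ℝ,
      (∀ j, 0 ≤ β' j) ∧
      A.mulVec β' = A.mulVec β ∧
      (Finset.univ.filter fun j => β' j ≠ 0).card ≤ A.rank := by
  exact reduce_aux M n A _ β hβ le_rfl
end

section
/- Let U ⊂ ℝ^N be a nonempty finite set and let rad(U) = max{‖p − p′‖ : p, p′ ∈ U}. Let μ and μ̃ be probability measures on ℝ^N, both with support contained in U, such that ∫ q dμ = ∫ q dμ̃ for every polynomial q : ℝ^N → ℝ of total degree at most m. Then for every (m+1)-times continuously differentiable function f : ℝ^N → ℝ, | ∫ f dμ − ∫ f dμ̃ | ≤ (2 · rad(U)^{m+1} / (m+1)!) · sup_{z ∈ conv(U)} ‖D^{m+1} f(z)‖, where ‖D^{m+1} f(z)‖ is the operator norm of the (m+1)-st Fréchet derivative and conv(U) is the convex hull of U. -/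
open MeasureTheory Set

theorem aux_itfd_comp_add_const {E : Type} [NormedAddCommGroup E] [NormedSpace ℝ E] :
    ∀ (n : ℕ) {F : Type} [NormedAddCommGroup F] [NormedSpace ℝ F]
      (f : E → F), ContDiff ℝ (n : WithTop ℕ∞) f → ∀ (c x : E),
      iteratedFDeriv ℝ n (fun y => f (y + c)) x = iteratedFDeriv ℝ n f (x + c)
  | 0, F, _, _, f, hf, c, x => by ext m; simp
  | (n+1), F, _, _, f, hf, c, x => by
    have hd : Differentiable ℝ f := hf.differentiable (by simp)
    have key : (fun y => fderiv ℝ (fun z => f (z + c)) y) = fun y => fderiv ℝ f (y + c) := by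
      funext y
      have h1 : HasFDerivAt (fun z => f (z + c)) (fderiv ℝ f (y + c)) y := by
        simpa [Function.comp_def] using ((hd (y + c)).hasFDerivAt.comp y ((hasFDerivAt_id y).add_const c))
      exact h1.fderiv
    have hfd : ContDiff ℝ (n : WithTop ℕ∞) (fderiv ℝ f) :=
      hf.fderiv_right (by exact_mod_cast le_rfl)
    ext m
    rw [iteratedFDeriv_succ_apply_right, iteratedFDeriv_succ_apply_right, key,
      aux_itfd_comp_add_const n (fun y => fderiv ℝ f y) hfd c x]

theorem aux_idw_eq_id {g : ℝ → ℝ} {n k : ℕ} (hg : ContDiff ℝ (n : WithTop ℕ∞) g)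
    (hk : k ≤ n) {s : Set ℝ} (hs : UniqueDiffOn ℝ s) {x : ℝ} (hx : x ∈ s) :
    iteratedDerivWithin k g s x = iteratedDeriv k g x := by
  rw [iteratedDerivWithin_eq_iteratedFDerivWithin, iteratedDeriv_eq_iteratedFDeriv]
  congr 1
  have h : HasFTaylorSeriesUpToOn (n : WithTop ℕ∞) g (ftaylorSeries ℝ g) s :=
    (contDiff_iff_ftaylorSeries.mp (by exact_mod_cast hg)).hasFTaylorSeriesUpToOn s
  exact (h.eq_iteratedFDerivWithin_of_uniqueDiffOn (by exact_mod_cast hk) hs hx).symm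

theorem aux_line {N : ℕ} (f : EuclideanSpace ℝ (Fin N) → ℝ) {n : ℕ}
    (hf : ContDiff ℝ (n : WithTop ℕ∞) f) (p₀ v : EuclideanSpace ℝ (Fin N))
    {k : ℕ} (hk : k ≤ n) (t : ℝ) :
    iteratedDeriv k (fun t : ℝ => f (t • v + p₀)) t
      = iteratedFDeriv ℝ k f (t • v + p₀) (fun _ => v) := by
  set L : ℝ →L[ℝ] EuclideanSpace ℝ (Fin N) := (1 : ℝ →L[ℝ] ℝ).smulRight v with hL
  have hf₁ : ContDiff ℝ (n : WithTop ℕ∞) (fun y => f (y + p₀)) :=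
    hf.comp (contDiff_id.add contDiff_const)
  have hcomp : (fun t : ℝ => f (t • v + p₀)) = (fun y => f (y + p₀)) ∘ L := by
    funext s; simp [hL]
  rw [iteratedDeriv_eq_iteratedFDeriv, hcomp,
    L.iteratedFDeriv_comp_right hf₁ t (by exact_mod_cast hk)]
  have h2 := aux_itfd_comp_add_const k f (hf.of_le (by exact_mod_cast hk)) p₀ (t • v)
  simp [hL, h2]

set_option maxHeartbeats 2000000 in
theorem aux_taylor_bound {N m : ℕ} (f : EuclideanSpace ℝ (Fin N) → ℝ)
    (hf : ContDiff ℝ ((m + 1 : ℕ) : WithTop ℕ∞) f) (p₀ x : EuclideanSpace ℝ (Fin N)) (S : ℝ)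
    (hS : ∀ t ∈ Icc (0:ℝ) 1, ‖iteratedFDeriv ℝ (m+1) f (t • (x - p₀) + p₀)‖ ≤ S) :
    |f x - ∑ k ∈ Finset.range (m+1),
        ((k.factorial : ℝ)⁻¹) • iteratedFDeriv ℝ k f p₀ (fun _ => x - p₀)|
      ≤ S * ‖x - p₀‖ ^ (m+1) / (m+1).factorial := by
  set v := x - p₀ with hv
  set g := fun t : ℝ => f (t • v + p₀) with hgdef
  have hg : ContDiff ℝ ((m + 1 : ℕ) : WithTop ℕ∞) g :=
    hf.comp ((contDiff_id.smul contDiff_const).add contDiff_const)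
  have hgOn : ContDiffOn ℝ m g (Icc (0:ℝ) 1) :=
    (hg.of_le (by exact_mod_cast Nat.le_succ m)).contDiffOn
  have hdiff : DifferentiableOn ℝ (iteratedDerivWithin m g (Icc (0:ℝ) 1)) (Ioo (0:ℝ) 1) :=
    ((hg.differentiable_iteratedDeriv m
        (by exact_mod_cast Nat.lt_succ_self m)).differentiableOn).congr
      (fun t ht => aux_idw_eq_id hg (Nat.le_succ m) (uniqueDiffOn_Icc zero_lt_one)
        (Ioo_subset_Icc_self ht))
  obtain ⟨x', hx', hlag⟩ := taylor_mean_remainder_lagrange (n := m) zero_ne_one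
    (by rwa [uIcc_of_le zero_le_one]) (by rwa [uIcc_of_le zero_le_one, uIoo_of_le zero_le_one])
  rw [uIcc_of_le zero_le_one] at hlag
  rw [uIoo_of_le zero_le_one] at hx'
  have hT : taylorWithinEval g m (Icc (0:ℝ) 1) 0 1
      = ∑ k ∈ Finset.range (m+1),
          ((k.factorial : ℝ)⁻¹) • iteratedFDeriv ℝ k f p₀ (fun _ => v) := by
    rw [taylor_within_apply]
    refine Finset.sum_congr rfl fun k hk => ?_
    have hk' : k ≤ m + 1 := Nat.le_of_lt_succ (Finset.mem_range.mp hk) |>.trans (Nat.le_succ m)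
    rw [aux_idw_eq_id hg hk' (uniqueDiffOn_Icc zero_lt_one) (left_mem_Icc.mpr zero_le_one),
      hgdef, aux_line f hf p₀ v hk' 0]
    norm_num
  have hg1 : g 1 = f x := by
    simp [hgdef, hv]
  have hfact : (0:ℝ) < (m+1).factorial := by exact_mod_cast (m+1).factorial_pos
  have hrem : |iteratedDerivWithin (m+1) g (Icc (0:ℝ) 1) x'| ≤ S * ‖v‖ ^ (m+1) := by
    rw [aux_idw_eq_id hg le_rfl (uniqueDiffOn_Icc zero_lt_one) (Ioo_subset_Icc_self hx'),
      hgdef, aux_line f hf p₀ v le_rfl x']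
    have h1 : |iteratedFDeriv ℝ (m+1) f (x' • v + p₀) (fun _ => v)|
        ≤ ‖iteratedFDeriv ℝ (m+1) f (x' • v + p₀)‖ * ‖v‖ ^ (m+1) := by
      have := (iteratedFDeriv ℝ (m+1) f (x' • v + p₀)).le_opNorm (fun _ => v)
      simpa [Finset.prod_const] using this
    refine h1.trans ?_
    have hvnonneg : (0:ℝ) ≤ ‖v‖ ^ (m+1) := by positivity
    exact mul_le_mul_of_nonneg_right (hS x' (Ioo_subset_Icc_self hx')) hvnonneg
  rw [hg1, hT] at hlag
  rw [hlag]
  rw [abs_div]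
  rw [abs_of_pos hfact]
  rw [div_le_div_iff_of_pos_right hfact]
  calc |iteratedDerivWithin (m+1) g (Icc (0:ℝ) 1) x' * (1 - 0) ^ (m+1)|
      = |iteratedDerivWithin (m+1) g (Icc (0:ℝ) 1) x'| := by norm_num
    _ ≤ S * ‖v‖ ^ (m+1) := hrem

theorem aux_poly (N m : ℕ) (f : EuclideanSpace ℝ (Fin N) → ℝ) (p₀ : EuclideanSpace ℝ (Fin N)) :
    ∃ P : MvPolynomial (Fin N) ℝ, P.totalDegree ≤ m ∧ ∀ x : EuclideanSpace ℝ (Fin N),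
      MvPolynomial.eval (fun i => x i) P
        = ∑ k ∈ Finset.range (m+1),
            ((k.factorial : ℝ)⁻¹) • iteratedFDeriv ℝ k f p₀ (fun _ => x - p₀) := by
  classical
  refine ⟨∑ k ∈ Finset.range (m+1), ∑ j : Fin k → Fin N,
      MvPolynomial.C ((k.factorial : ℝ)⁻¹
          * iteratedFDeriv ℝ k f p₀ (fun i => EuclideanSpace.single (j i) 1))
        * ∏ i : Fin k, (MvPolynomial.X (j i) - MvPolynomial.C (p₀ (j i))), ?_, ?_⟩
  · refine (MvPolynomial.totalDegree_finset_sum _ _).trans ?_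
    refine Finset.sup_le fun k hk => ?_
    refine (MvPolynomial.totalDegree_finset_sum _ _).trans ?_
    refine Finset.sup_le fun j _ => ?_
    refine (MvPolynomial.totalDegree_mul _ _).trans ?_
    rw [MvPolynomial.totalDegree_C]
    have hprod := MvPolynomial.totalDegree_finset_prod Finset.univ
      fun i : Fin k => (MvPolynomial.X (j i) - MvPolynomial.C (p₀ (j i)) : MvPolynomial (Fin N) ℝ)
    refine le_trans (by simpa using hprod) ?_
    have h1 : ∀ i : Fin k,
        (MvPolynomial.X (j i) - MvPolynomial.C (p₀ (j i)) :
          MvPolynomial (Fin N) ℝ).totalDegree ≤ 1 := by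
      intro i
      rw [sub_eq_add_neg, ← MvPolynomial.C_neg]
      refine (MvPolynomial.totalDegree_add _ _).trans ?_
      simp [MvPolynomial.totalDegree_X, MvPolynomial.totalDegree_C]
    refine le_trans (Finset.sum_le_sum fun i _ => h1 i) ?_
    simpa using Nat.le_of_lt_succ (Finset.mem_range.mp hk)
  · intro x
    rw [map_sum]
    refine Finset.sum_congr rfl fun k _ => ?_
    have hw : iteratedFDeriv ℝ k f p₀ (fun _ => x - p₀)
        = ∑ j : Fin k → Fin N, (∏ i : Fin k, (x (j i) - p₀ (j i)))
            • iteratedFDeriv ℝ k f p₀ (fun i => EuclideanSpace.single (j i) 1) := by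
      have hrepr : (x - p₀ : EuclideanSpace ℝ (Fin N))
          = ∑ j : Fin N, (x j - p₀ j) • EuclideanSpace.single j (1:ℝ) := by
        have := (EuclideanSpace.basisFun (Fin N) ℝ).sum_repr (x - p₀)
        simp only [EuclideanSpace.basisFun_repr, EuclideanSpace.basisFun_apply] at this
        rw [← this]
        refine Finset.sum_congr rfl fun j _ => by rw [PiLp.sub_apply]
      rw [show (fun _ : Fin k => x - p₀)
          = fun _ : Fin k => ∑ j : Fin N, (x j - p₀ j) • EuclideanSpace.single j (1:ℝ) from
        funext fun _ => hrepr]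
      have hms := ((iteratedFDeriv ℝ k f p₀).toMultilinearMap).map_sum
        (g := fun _ j => (x j - p₀ j) • EuclideanSpace.single j (1:ℝ))
      simp only [ContinuousMultilinearMap.coe_coe] at hms
      rw [hms]
      refine Finset.sum_congr rfl fun j _ => ?_
      exact (iteratedFDeriv ℝ k f p₀).map_smul_univ
        (fun i => x (j i) - p₀ (j i)) (fun i => EuclideanSpace.single (j i) 1)
    rw [hw, map_sum, Finset.smul_sum]
    refine Finset.sum_congr rfl fun j _ => ?_
    rw [MvPolynomial.eval_mul, MvPolynomial.eval_C, map_prod]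
    simp only [MvPolynomial.eval_sub, MvPolynomial.eval_X, MvPolynomial.eval_C,
      smul_eq_mul, smul_smul]
    ring

theorem aux_integrable {N : ℕ} {μ : Measure (EuclideanSpace ℝ (Fin N))} [IsProbabilityMeasure μ]
    {U : Finset (EuclideanSpace ℝ (Fin N))} (hUne : U.Nonempty)
    (hμ : μ (↑U : Set (EuclideanSpace ℝ (Fin N)))ᶜ = 0)
    {h : EuclideanSpace ℝ (Fin N) → ℝ} (hc : Continuous h) :
    Integrable h μ := by
  have hae : ∀ᵐ x ∂μ, x ∈ (↑U : Set (EuclideanSpace ℝ (Fin N))) := by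
    rw [ae_iff]; exact hμ
  refine ⟨hc.aestronglyMeasurable,
    HasFiniteIntegral.of_bounded (C := U.sup' hUne fun p => ‖h p‖) ?_⟩
  filter_upwards [hae] with x hx
  exact Finset.le_sup' (fun p => ‖h p‖) hx

/-- **Per-patch recombination error estimate** (Statement 5).
Let `U ⊂ ℝ^N` be a nonempty finite set of radius `rad(U) = max{‖p − p'‖ : p, p' ∈ U}`
(the metric diameter of `U`).  If the probability measures `μ` and `μ'` are both
supported in `U` and agree on all polynomials of total degree at most `m`, then for
every `(m+1)`-times continuously differentiable `f : ℝ^N → ℝ`,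
`|∫ f dμ − ∫ f dμ'| ≤ (2 rad(U)^(m+1)/(m+1)!) · sup_{z ∈ conv U} ‖D^{m+1} f(z)‖`. -/
theorem patch_recombination_error
    (N m : ℕ) (hN : 1 ≤ N)
    (U : Finset (EuclideanSpace ℝ (Fin N))) (hU : U.Nonempty)
    (μ μ' : Measure (EuclideanSpace ℝ (Fin N)))
    [IsProbabilityMeasure μ] [IsProbabilityMeasure μ']
    (hμ : μ (↑U : Set (EuclideanSpace ℝ (Fin N)))ᶜ = 0)
    (hμ' : μ' (↑U : Set (EuclideanSpace ℝ (Fin N)))ᶜ = 0)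
    (hpoly : ∀ P : MvPolynomial (Fin N) ℝ, P.totalDegree ≤ m →
      ∫ x, MvPolynomial.eval (fun i => x i) P ∂μ
        = ∫ x, MvPolynomial.eval (fun i => x i) P ∂μ')
    (f : EuclideanSpace ℝ (Fin N) → ℝ) (hf : ContDiff ℝ (↑(m + 1)) f) :
    |(∫ x, f x ∂μ) - ∫ x, f x ∂μ'|
      ≤ 2 * Metric.diam (↑U : Set (EuclideanSpace ℝ (Fin N))) ^ (m + 1)
          / (Nat.factorial (m + 1) : ℝ) *
        ⨆ z ∈ convexHull ℝ (↑U : Set (EuclideanSpace ℝ (Fin N))),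
          ‖iteratedFDeriv ℝ (m + 1) f z‖ := by
  classical
  obtain ⟨p₀, hp₀⟩ := id hU
  set K := convexHull ℝ (↑U : Set (EuclideanSpace ℝ (Fin N))) with hKdef
  set S := ⨆ z ∈ K, ‖iteratedFDeriv ℝ (m + 1) f z‖ with hSdef
  have hKcomp : IsCompact K := U.finite_toSet.isCompact_convexHull ℝ
  have hDcont : Continuous fun z => ‖iteratedFDeriv ℝ (m + 1) f z‖ :=
    (hf.continuous_iteratedFDeriv le_rfl).norm
  obtain ⟨M, hM⟩ := (hKcomp.image hDcont).bddAbove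
  have hGle : ∀ z, (⨆ _ : z ∈ K, ‖iteratedFDeriv ℝ (m + 1) f z‖) ≤ M ⊔ 0 := by
    intro z
    by_cases hz : z ∈ K
    · rw [ciSup_pos hz]
      exact le_sup_of_le_left (hM ⟨z, hz, rfl⟩)
    · simp [hz, Real.iSup_of_isEmpty]
  have hbdd : BddAbove (Set.range fun z => ⨆ _ : z ∈ K, ‖iteratedFDeriv ℝ (m + 1) f z‖) :=
    ⟨M ⊔ 0, by rintro _ ⟨z, rfl⟩; exact hGle z⟩
  have hSz : ∀ z ∈ K, ‖iteratedFDeriv ℝ (m + 1) f z‖ ≤ S := by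
    intro z hz
    have h1 : ‖iteratedFDeriv ℝ (m + 1) f z‖
        = ⨆ _ : z ∈ K, ‖iteratedFDeriv ℝ (m + 1) f z‖ :=
      (ciSup_pos (f := fun _ : z ∈ K => ‖iteratedFDeriv ℝ (m + 1) f z‖) hz).symm
    rw [h1, hSdef]
    exact le_ciSup hbdd z
  have hp₀K : p₀ ∈ K := subset_convexHull ℝ _ hp₀
  have hS0 : 0 ≤ S := le_trans (norm_nonneg _) (hSz p₀ hp₀K)
  set T : EuclideanSpace ℝ (Fin N) → ℝ := fun x => ∑ k ∈ Finset.range (m+1),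
      ((k.factorial : ℝ)⁻¹) • iteratedFDeriv ℝ k f p₀ (fun _ => x - p₀) with hT
  obtain ⟨P, hPdeg, hPeval⟩ := aux_poly N m f p₀
  have hUb : Bornology.IsBounded (↑U : Set (EuclideanSpace ℝ (Fin N))) :=
    U.finite_toSet.isBounded
  set C : ℝ := S * Metric.diam (↑U : Set (EuclideanSpace ℝ (Fin N))) ^ (m+1)
      / (m+1).factorial with hC
  have hfactpos : (0:ℝ) < (m+1).factorial := by exact_mod_cast (m+1).factorial_pos
  have hpoint : ∀ x ∈ U, |f x - T x| ≤ C := by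
    intro x hx
    have hxK : x ∈ K := subset_convexHull ℝ _ hx
    have hSb : ∀ t ∈ Icc (0:ℝ) 1, ‖iteratedFDeriv ℝ (m+1) f (t • (x - p₀) + p₀)‖ ≤ S := by
      intro t ht
      have h2 := (convex_convexHull ℝ (↑U : Set (EuclideanSpace ℝ (Fin N)))) hp₀K hxK
        (sub_nonneg.mpr ht.2) ht.1 (by ring)
      have he : (1-t) • p₀ + t • x = t • (x - p₀) + p₀ := by
        rw [smul_sub, sub_smul, one_smul]
        abel
      rw [he] at h2
      exact hSz _ h2
    have h1 := aux_taylor_bound f hf p₀ x S hSb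
    refine h1.trans ?_
    rw [hC]
    have hd : ‖x - p₀‖ ≤ Metric.diam (↑U : Set (EuclideanSpace ℝ (Fin N))) := by
      rw [← dist_eq_norm]
      exact Metric.dist_le_diam_of_mem hUb hx hp₀
    have hpow : ‖x - p₀‖ ^ (m+1)
        ≤ Metric.diam (↑U : Set (EuclideanSpace ℝ (Fin N))) ^ (m+1) :=
      pow_le_pow_left₀ (norm_nonneg _) hd _
    gcongr
  have haeU : ∀ᵐ x ∂μ, x ∈ (↑U : Set (EuclideanSpace ℝ (Fin N))) := by
    rw [ae_iff]; exact hμ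
  have haeU' : ∀ᵐ x ∂μ', x ∈ (↑U : Set (EuclideanSpace ℝ (Fin N))) := by
    rw [ae_iff]; exact hμ'
  have hTcont : Continuous T := by
    rw [hT]
    refine continuous_finset_sum _ fun k _ => ?_
    fun_prop
  have hfμ : Integrable f μ := aux_integrable hU hμ hf.continuous
  have hfμ' : Integrable f μ' := aux_integrable hU hμ' hf.continuous
  have hTμ : Integrable T μ := aux_integrable hU hμ hTcont
  have hTμ' : Integrable T μ' := aux_integrable hU hμ' hTcont
  have hTfun : T = fun x => MvPolynomial.eval (fun i => x i) P :=
    funext fun x => (hPeval x).symm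
  have hTμeq : ∫ x, T x ∂μ = ∫ x, T x ∂μ' := by
    rw [hTfun]
    exact hpoly P hPdeg
  have key : (∫ x, f x ∂μ) - ∫ x, f x ∂μ'
      = (∫ x, (f x - T x) ∂μ) - ∫ x, (f x - T x) ∂μ' := by
    rw [integral_sub hfμ hTμ, integral_sub hfμ' hTμ', hTμeq]
    ring
  have hb : ∀ (ν : Measure (EuclideanSpace ℝ (Fin N))), IsProbabilityMeasure ν →
      (∀ᵐ x ∂ν, x ∈ (↑U : Set (EuclideanSpace ℝ (Fin N)))) →
      |∫ x, (f x - T x) ∂ν| ≤ C := by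
    intro ν hν hae
    have hbound : ∀ᵐ x ∂ν, ‖f x - T x‖ ≤ C := by
      filter_upwards [hae] with x hx
      simpa [Real.norm_eq_abs] using hpoint x hx
    have := norm_integral_le_of_norm_le_const hbound
    simpa [Real.norm_eq_abs, measure_univ] using this
  rw [key]
  calc |(∫ x, (f x - T x) ∂μ) - ∫ x, (f x - T x) ∂μ'|
      ≤ |∫ x, (f x - T x) ∂μ| + |∫ x, (f x - T x) ∂μ'| := by
        simpa [Real.norm_eq_abs] using
          norm_sub_le (∫ x, (f x - T x) ∂μ) (∫ x, (f x - T x) ∂μ')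
    _ ≤ C + C := add_le_add (hb μ inferInstance haeU) (hb μ' inferInstance haeU')
    _ = 2 * Metric.diam (↑U : Set (EuclideanSpace ℝ (Fin N))) ^ (m + 1)
          / (Nat.factorial (m + 1) : ℝ) * S := by
        rw [hC]; ring
end

section
/- Let U_1, …, U_l be pairwise disjoint nonempty finite subsets of ℝ^N and let ν be a probability measure with support equal to U_1 ∪ … ∪ U_l. For each k with ν(U_k) > 0, let ν|_{U_k} denote the conditional probability measure ν|_{U_k}(·) = ν(· ∩ U_k)/ν(U_k), and let ν̃_k be a probability measure with support contained in U_k such that ∫ q dν̃_k = ∫ q d(ν|_{U_k}) for every polynomial q of total degree at most m. Set μ = Σ_{k=1}^{l} ν(U_k) ν̃_k. Then for every (m+1)-times continuously differentiable f : ℝ^N → ℝ, | ∫ f dν − ∫ f dμ | ≤ (2/(m+1)!) Σ_{k=1}^{l} ν(U_k) · rad(U_k)^{m+1} · sup_{z ∈ conv(U_k)} ‖D^{m+1} f(z)‖. -/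
open MeasureTheory

-- Aux 1: integrability for measures concentrated on a finite set
lemma integrable_of_null_compl {α : Type*} [MeasurableSpace α] [MeasurableSingletonClass α]
    {μ : Measure α} [IsFiniteMeasure μ] {T : Finset α} (hμ : μ (↑T : Set α)ᶜ = 0)
    (h : α → ℝ) : Integrable h μ := by
  classical
  set s : α → ℝ := fun x => ∑ p ∈ T, Set.indicator {p} (fun _ => h p) x with hs
  have hint : Integrable s μ := by
    apply integrable_finset_sum
    intro p _
    exact (integrable_const (h p)).indicator (measurableSet_singleton p)
  refine hint.congr ?_
  have hae : ∀ᵐ x ∂μ, x ∈ (↑T : Set α) := by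
    rw [ae_iff]
    exact hμ
  filter_upwards [hae] with x hx
  rw [hs]
  simp only []
  rw [Finset.sum_eq_single x]
  · simp
  · intro p _ hpx
    simp [Set.indicator_of_notMem, Ne.symm hpx]
  · intro hxT; exact absurd hx (by simpa using hxT)
open MeasureTheory

variable {E F : Type*} [NormedAddCommGroup E] [NormedSpace ℝ E]
  [NormedAddCommGroup F] [NormedSpace ℝ F]

-- within = global
lemma iteratedFDerivWithin_eq_iteratedFDeriv' {n : WithTop ℕ∞} {f : E → F} {s : Set E}
    (hs : UniqueDiffOn ℝ s) (hf : ContDiff ℝ n f) {x : E} (hx : x ∈ s) {i : ℕ}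
    (hi : (i : WithTop ℕ∞) ≤ n) :
    iteratedFDerivWithin ℝ i f s x = iteratedFDeriv ℝ i f x := by
  have h1 : HasFTaylorSeriesUpToOn n f (ftaylorSeries ℝ f) s := by
    have := (hf.contDiffOn.ftaylorSeriesWithin uniqueDiffOn_univ).mono (Set.subset_univ s)
    rwa [ftaylorSeriesWithin_univ] at this
  exact (h1.eq_iteratedFDerivWithin_of_uniqueDiffOn hi hs hx).symm

lemma iteratedDerivWithin_eq_iteratedDeriv' {n : WithTop ℕ∞} {f : ℝ → F} {s : Set ℝ}
    (hs : UniqueDiffOn ℝ s) (hf : ContDiff ℝ n f) {x : ℝ} (hx : x ∈ s) {i : ℕ}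
    (hi : (i : WithTop ℕ∞) ≤ n) :
    iteratedDerivWithin i f s x = iteratedDeriv i f x := by
  rw [iteratedDerivWithin_eq_iteratedFDerivWithin, iteratedDeriv_eq_iteratedFDeriv,
    iteratedFDerivWithin_eq_iteratedFDeriv' hs hf hx hi]

-- translation
lemma iteratedFDeriv_comp_const_add' {n : WithTop ℕ∞} {f : E → F} (hf : ContDiff ℝ n f)
    (a : E) : ∀ {i : ℕ}, (i : WithTop ℕ∞) ≤ n → ∀ x : E,
    iteratedFDeriv ℝ i (fun y => f (a + y)) x = iteratedFDeriv ℝ i f (a + x) := by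
  intro i
  induction i with
  | zero => intro _ x; ext m; simp
  | succ i IH =>
    intro hi x
    have hi' : (i : WithTop ℕ∞) ≤ n := le_trans (by exact_mod_cast Nat.le_succ i) hi
    have hlt : (i : WithTop ℕ∞) < n :=
      lt_of_lt_of_le (by exact_mod_cast Nat.lt_succ_self i) hi
    ext m
    rw [iteratedFDeriv_succ_apply_left, iteratedFDeriv_succ_apply_left]
    have hfun : iteratedFDeriv ℝ i (fun y => f (a + y)) =
        fun y => iteratedFDeriv ℝ i f (a + y) := funext fun y => IH hi' y
    have hD : HasFDerivAt (fun y : E => iteratedFDeriv ℝ i f (a + y))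
        (fderiv ℝ (iteratedFDeriv ℝ i f) (a + x)) x := by
      have houter : HasFDerivAt (iteratedFDeriv ℝ i f)
          (fderiv ℝ (iteratedFDeriv ℝ i f) (a + x)) (a + x) :=
        ((hf.differentiable_iteratedFDeriv hlt) (a + x)).hasFDerivAt
      have hinner : HasFDerivAt (fun y : E => a + y) (ContinuousLinearMap.id ℝ E) x :=
        (hasFDerivAt_id x).const_add a
      have := houter.comp x hinner; simp only [ContinuousLinearMap.comp_id] at this; exact this
    rw [hfun, hD.fderiv]

-- line lemma
lemma iteratedDeriv_line {n : WithTop ℕ∞} {f : E → F} (hf : ContDiff ℝ n f) (a v : E)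
    {i : ℕ} (hi : (i : WithTop ℕ∞) ≤ n) (t : ℝ) :
    iteratedDeriv i (fun s : ℝ => f (a + s • v)) t
      = iteratedFDeriv ℝ i f (a + t • v) (fun _ => v) := by
  set L : ℝ →L[ℝ] E := (ContinuousLinearMap.id ℝ ℝ).smulRight v with hL
  have hLt : ∀ s : ℝ, L s = s • v := fun s => rfl
  have hh : ContDiff ℝ n (fun y : E => f (a + y)) :=
    hf.comp (contDiff_const.add contDiff_id)
  have hcomp := L.iteratedFDeriv_comp_right hh t hi
  have hgeq : (fun s : ℝ => f (a + s • v)) = (fun y : E => f (a + y)) ∘ L := rfl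
  rw [iteratedDeriv_eq_iteratedFDeriv, hgeq, hcomp]
  rw [ContinuousMultilinearMap.compContinuousLinearMap_apply]
  rw [iteratedFDeriv_comp_const_add' hf a hi (L t)]
  have h1 : L t = t • v := rfl
  have h2 : (fun _ : Fin i => L 1) = fun _ : Fin i => v := by
    funext s; simp [hL]
  rw [h1, h2]

open Set in
lemma taylor_line_bound {f : E → ℝ} {m : ℕ} (hf : ContDiff ℝ ((m+1 : ℕ) : WithTop ℕ∞) f)
    (p₀ x : E) {C : ℝ}
    (hC : ∀ t ∈ Set.Icc (0:ℝ) 1, ‖iteratedFDeriv ℝ (m+1) f (p₀ + t • (x - p₀))‖ ≤ C) :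
    |f x - ∑ j ∈ Finset.range (m+1),
        ((j.factorial : ℝ)⁻¹) • iteratedFDeriv ℝ j f p₀ (fun _ => x - p₀)|
      ≤ C * ‖x - p₀‖ ^ (m+1) / ((m+1).factorial : ℝ) := by
  set v := x - p₀ with hv
  set g : ℝ → ℝ := fun t => f (p₀ + t • v) with hg'
  have hg : ContDiff ℝ ((m+1 : ℕ) : WithTop ℕ∞) g :=
    hf.comp (contDiff_const.add (contDiff_id.smul contDiff_const))
  have h01 : (0:ℝ) < 1 := one_pos
  have hcd : ContDiffOn ℝ (m : WithTop ℕ∞) g (Icc 0 1) :=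
    (hg.of_le (by exact_mod_cast Nat.le_succ m)).contDiffOn
  have hdiff : DifferentiableOn ℝ (iteratedDerivWithin m g (Icc 0 1)) (Ioo 0 1) :=
    (hg.contDiffOn.differentiableOn_iteratedDerivWithin (mod_cast m.lt_succ_self)
      (uniqueDiffOn_Icc h01)).mono Ioo_subset_Icc_self
  obtain ⟨x', hx', hrem⟩ := taylor_mean_remainder_lagrange (x₀ := 0) (x := 1) h01.ne
    (by rwa [uIcc_of_le h01.le]) (by rwa [uIcc_of_le h01.le, uIoo_of_le h01.le])
  rw [uIcc_of_le h01.le] at hrem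
  rw [uIoo_of_le h01.le] at hx'
  have hg1 : g 1 = f x := by simp [hg', hv]
  have hT : taylorWithinEval g m (Icc 0 1) 0 1 = ∑ j ∈ Finset.range (m+1),
      ((j.factorial : ℝ)⁻¹) • iteratedFDeriv ℝ j f p₀ (fun _ => v) := by
    rw [taylor_within_apply]
    refine Finset.sum_congr rfl fun k hk => ?_
    have hk' : (k : WithTop ℕ∞) ≤ (m+1 : ℕ) := by
      exact_mod_cast Nat.le_of_lt_succ (Finset.mem_range.mp hk) |>.trans (Nat.le_succ m)
    rw [iteratedDerivWithin_eq_iteratedDeriv' (uniqueDiffOn_Icc h01) hg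
        (by simp : (0:ℝ) ∈ Icc (0:ℝ) 1) hk',
      iteratedDeriv_line hf p₀ v hk']
    norm_num
  have hx'I : x' ∈ Icc (0:ℝ) 1 := Ioo_subset_Icc_self hx'
  have hder : iteratedDerivWithin (m+1) g (Icc 0 1) x'
      = iteratedFDeriv ℝ (m+1) f (p₀ + x' • v) (fun _ => v) := by
    rw [iteratedDerivWithin_eq_iteratedDeriv' (uniqueDiffOn_Icc h01) hg hx'I le_rfl,
      iteratedDeriv_line hf p₀ v le_rfl]
  rw [← hg1, ← hT, hrem, hder]
  have hnorm : |iteratedFDeriv ℝ (m+1) f (p₀ + x' • v) (fun _ => v)| ≤ C * ‖v‖ ^ (m+1) := by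
    have h1 := (iteratedFDeriv ℝ (m+1) f (p₀ + x' • v)).le_opNorm (fun _ => v)
    have h2 : (∏ _i : Fin (m+1), ‖v‖) = ‖v‖ ^ (m+1) := by
      simp [Finset.prod_const]
    rw [← Real.norm_eq_abs]
    calc ‖iteratedFDeriv ℝ (m+1) f (p₀ + x' • v) (fun _ => v)‖
        ≤ ‖iteratedFDeriv ℝ (m+1) f (p₀ + x' • v)‖ * ‖v‖ ^ (m+1) := by rw [← h2]; exact h1
      _ ≤ C * ‖v‖ ^ (m+1) :=
          mul_le_mul_of_nonneg_right (hC x' hx'I) (by positivity)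
  rw [sub_zero, one_pow, mul_one, abs_div, Nat.abs_cast]
  gcongr

lemma multilinear_diag_expand {N j : ℕ}
    (D : ContinuousMultilinearMap ℝ (fun _ : Fin j => EuclideanSpace ℝ (Fin N)) ℝ)
    (w : EuclideanSpace ℝ (Fin N)) :
    D (fun _ => w) = ∑ d : Fin j → Fin N,
      (∏ a, w (d a)) * D (fun a => (EuclideanSpace.basisFun (Fin N) ℝ) (d a)) := by
  classical
  set b := EuclideanSpace.basisFun (Fin N) ℝ with hb
  have hsum : ∑ i, w i • b i = w := by
    simpa [hb, EuclideanSpace.basisFun_repr] using b.sum_repr w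
  have hw : (fun _ : Fin j => w) = fun _ : Fin j => ∑ i, w i • b i := by
    funext a; rw [hsum]
  rw [hw, D.map_sum]
  refine Finset.sum_congr rfl fun r _ => ?_
  rw [D.map_smul_univ (fun a => w (r a)) (fun a => b (r a)), smul_eq_mul]

lemma exists_taylor_poly (N m : ℕ) (f : EuclideanSpace ℝ (Fin N) → ℝ)
    (p₀ : EuclideanSpace ℝ (Fin N)) :
    ∃ P : MvPolynomial (Fin N) ℝ, P.totalDegree ≤ m ∧ ∀ x : EuclideanSpace ℝ (Fin N),
      MvPolynomial.eval (fun i => x i) P = ∑ j ∈ Finset.range (m+1),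
        ((j.factorial : ℝ)⁻¹) • iteratedFDeriv ℝ j f p₀ (fun _ => x - p₀) := by
  classical
  set b := EuclideanSpace.basisFun (Fin N) ℝ with hb
  refine ⟨∑ j ∈ Finset.range (m+1), MvPolynomial.C ((j.factorial : ℝ)⁻¹) *
      ∑ d : Fin j → Fin N,
        MvPolynomial.C (iteratedFDeriv ℝ j f p₀ (fun a => b (d a))) *
          ∏ a, (MvPolynomial.X (d a) - MvPolynomial.C (p₀ (d a))), ?_, ?_⟩
  · refine le_trans (MvPolynomial.totalDegree_finset_sum _ _) (Finset.sup_le fun j hj => ?_)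
    have hj' : j ≤ m := Nat.le_of_lt_succ (Finset.mem_range.mp hj)
    refine le_trans (MvPolynomial.totalDegree_mul _ _) ?_
    rw [MvPolynomial.totalDegree_C, zero_add]
    refine le_trans (MvPolynomial.totalDegree_finset_sum _ _) (Finset.sup_le fun d _ => ?_)
    refine le_trans (MvPolynomial.totalDegree_mul _ _) ?_
    rw [MvPolynomial.totalDegree_C, zero_add]
    refine le_trans (MvPolynomial.totalDegree_finset_prod _ _) (le_trans ?_ hj')
    have hfac : ∀ a : Fin j,
        (MvPolynomial.X (d a) - MvPolynomial.C (p₀ (d a)) : MvPolynomial (Fin N) ℝ).totalDegree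
          ≤ 1 := by
      intro a
      rw [sub_eq_add_neg, ← map_neg]
      refine le_trans (MvPolynomial.totalDegree_add _ _) (max_le ?_ ?_)
      · exact le_of_eq (MvPolynomial.totalDegree_X _)
      · rw [MvPolynomial.totalDegree_C]; exact zero_le_one
    calc ∑ a : Fin j, (MvPolynomial.X (d a)
            - MvPolynomial.C (p₀ (d a)) : MvPolynomial (Fin N) ℝ).totalDegree
        ≤ ∑ _a : Fin j, 1 := Finset.sum_le_sum fun a _ => hfac a
      _ = j := by simp
  · intro x
    simp only [map_sum, map_mul, MvPolynomial.eval_C, map_prod, map_sub, MvPolynomial.eval_X]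
    refine Finset.sum_congr rfl fun j _ => ?_
    rw [smul_eq_mul]
    congr 1
    rw [multilinear_diag_expand (iteratedFDeriv ℝ j f p₀) (x - p₀)]
    refine Finset.sum_congr rfl fun d _ => ?_
    rw [mul_comm]
    congr 1

lemma le_biSup_real {α : Type*} {s : Set α} {h : α → ℝ} (hb : BddAbove (h '' s))
    {z : α} (hz : z ∈ s) : h z ≤ ⨆ x ∈ s, h x := by
  classical
  obtain ⟨Cb, hCb⟩ := hb
  have hrange : BddAbove (Set.range fun x => ⨆ _ : x ∈ s, h x) := by
    refine ⟨max Cb 0, ?_⟩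
    rintro y ⟨x, rfl⟩
    simp only []
    show (⨆ _ : x ∈ s, h x) ≤ Cb ⊔ 0
    by_cases hx : x ∈ s
    · haveI : Nonempty (x ∈ s) := ⟨hx⟩
      rw [ciSup_const]
      exact le_max_of_le_left (hCb ⟨x, hx, rfl⟩)
    · haveI : IsEmpty (x ∈ s) := ⟨hx⟩
      rw [Real.iSup_of_isEmpty]
      exact le_max_right _ _
  have h1 : h z = ⨆ _ : z ∈ s, h z := by
    haveI : Nonempty (z ∈ s) := ⟨hz⟩
    rw [ciSup_const]
  rw [h1]
  exact le_ciSup hrange z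

open Set in
lemma patch_est (N m : ℕ) (T : Finset (EuclideanSpace ℝ (Fin N))) (hT : T.Nonempty)
    (f : EuclideanSpace ℝ (Fin N) → ℝ) (hf : ContDiff ℝ ((m+1 : ℕ) : WithTop ℕ∞) f)
    (μ₁ μ₂ : Measure (EuclideanSpace ℝ (Fin N)))
    [IsProbabilityMeasure μ₁] [IsProbabilityMeasure μ₂]
    (h₁ : μ₁ (↑T : Set (EuclideanSpace ℝ (Fin N)))ᶜ = 0)
    (h₂ : μ₂ (↑T : Set (EuclideanSpace ℝ (Fin N)))ᶜ = 0)
    (hmatch : ∀ P : MvPolynomial (Fin N) ℝ, P.totalDegree ≤ m →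
      ∫ x, MvPolynomial.eval (fun i => x i) P ∂μ₁
        = ∫ x, MvPolynomial.eval (fun i => x i) P ∂μ₂) :
    |∫ x, f x ∂μ₁ - ∫ x, f x ∂μ₂| ≤
      2 / ((m+1).factorial : ℝ) * (Metric.diam (↑T : Set (EuclideanSpace ℝ (Fin N))) ^ (m+1) *
        ⨆ z ∈ convexHull ℝ (↑T : Set (EuclideanSpace ℝ (Fin N))),
          ‖iteratedFDeriv ℝ (m+1) f z‖) := by
  classical
  obtain ⟨p₀, hp₀⟩ := hT
  set S : Set (EuclideanSpace ℝ (Fin N)) := convexHull ℝ (↑T : Set (EuclideanSpace ℝ (Fin N))) with hS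
  set M : ℝ := ⨆ z ∈ S, ‖iteratedFDeriv ℝ (m+1) f z‖ with hMdef
  have hcomp : IsCompact S := T.finite_toSet.isCompact_convexHull ℝ
  have hcont : Continuous fun z : EuclideanSpace ℝ (Fin N) => ‖iteratedFDeriv ℝ (m+1) f z‖ :=
    (hf.continuous_iteratedFDeriv le_rfl).norm
  have hbdd : BddAbove ((fun z : EuclideanSpace ℝ (Fin N) => ‖iteratedFDeriv ℝ (m+1) f z‖) '' S) :=
    (hcomp.image hcont).bddAbove
  have hM : ∀ z ∈ S, ‖iteratedFDeriv ℝ (m+1) f z‖ ≤ M := fun z hz => le_biSup_real hbdd hz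
  have hp₀S : p₀ ∈ S := subset_convexHull ℝ _ (Finset.mem_coe.mpr hp₀)
  have hMnn : 0 ≤ M := le_trans (norm_nonneg _) (hM p₀ hp₀S)
  set d : ℝ := Metric.diam (↑T : Set (EuclideanSpace ℝ (Fin N))) with hd
  have hdnn : 0 ≤ d := Metric.diam_nonneg
  set Tay : EuclideanSpace ℝ (Fin N) → ℝ := fun x => ∑ j ∈ Finset.range (m+1),
      ((j.factorial : ℝ)⁻¹) • iteratedFDeriv ℝ j f p₀ (fun _ => x - p₀) with hTay
  set b : ℝ := M * d ^ (m+1) / ((m+1).factorial : ℝ) with hbdef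
  -- pointwise bound on T
  have hpt : ∀ x ∈ (↑T : Set (EuclideanSpace ℝ (Fin N))), |f x - Tay x| ≤ b := by
    intro x hx
    have hC : ∀ t ∈ Set.Icc (0:ℝ) 1,
        ‖iteratedFDeriv ℝ (m+1) f (p₀ + t • (x - p₀))‖ ≤ M := by
      intro t ht
      refine hM _ ?_
      have hseg : p₀ + t • (x - p₀) ∈ segment ℝ p₀ x := by
        refine ⟨1 - t, t, by linarith [ht.2], ht.1, by ring, ?_⟩
        module
      exact (convex_convexHull ℝ _).segment_subset hp₀S (subset_convexHull ℝ _ hx) hseg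
    refine le_trans (taylor_line_bound hf p₀ x hC) ?_
    rw [hbdef]
    gcongr
    rw [← dist_eq_norm]
    exact Metric.dist_le_diam_of_mem T.finite_toSet.isBounded hx (Finset.mem_coe.mpr hp₀)
  have hbnn : 0 ≤ b := by
    have := hpt p₀ (Finset.mem_coe.mpr hp₀)
    exact le_trans (abs_nonneg _) this
  -- polynomial matching
  obtain ⟨P, hPdeg, hPeval⟩ := exists_taylor_poly N m f p₀
  have hTaymatch : ∫ x, Tay x ∂μ₁ = ∫ x, Tay x ∂μ₂ := by
    have := hmatch P hPdeg
    rw [show (fun x : EuclideanSpace ℝ (Fin N) => MvPolynomial.eval (fun i => x i) P) = Tay from funext hPeval] at this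
    exact this
  -- integrability
  have int₁ : ∀ h : EuclideanSpace ℝ (Fin N) → ℝ, Integrable h μ₁ := fun h => integrable_of_null_compl h₁ h
  have int₂ : ∀ h : EuclideanSpace ℝ (Fin N) → ℝ, Integrable h μ₂ := fun h => integrable_of_null_compl h₂ h
  -- main bound
  have key : ∀ (μ : Measure (EuclideanSpace ℝ (Fin N))), IsProbabilityMeasure μ →
      μ (↑T : Set (EuclideanSpace ℝ (Fin N)))ᶜ = 0 → (∀ h : EuclideanSpace ℝ (Fin N) → ℝ, Integrable h μ) →
      |∫ x, (f x - Tay x) ∂μ| ≤ b := by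
    intro μ hpm hnull hint
    haveI := hpm
    rw [← Real.norm_eq_abs]
    refine le_trans (norm_integral_le_integral_norm _) ?_
    simp_rw [Real.norm_eq_abs]
    have hae : ∀ᵐ x ∂μ, |f x - Tay x| ≤ b := by
      have hmem : ∀ᵐ x ∂μ, x ∈ (↑T : Set (EuclideanSpace ℝ (Fin N))) := by
        rw [ae_iff]; exact hnull
      filter_upwards [hmem] with x hx using hpt x hx
    calc ∫ x, |f x - Tay x| ∂μ ≤ ∫ _, b ∂μ :=
          integral_mono_ae (hint _) (integrable_const b) hae
      _ = b := by simp
  have hsplit : (∫ x, f x ∂μ₁) - ∫ x, f x ∂μ₂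
      = (∫ x, (f x - Tay x) ∂μ₁) - ∫ x, (f x - Tay x) ∂μ₂ := by
    rw [integral_sub (int₁ f) (int₁ Tay), integral_sub (int₂ f) (int₂ Tay), hTaymatch]
    ring
  rw [hsplit]
  have h1 := key μ₁ inferInstance h₁ int₁
  have h2 := key μ₂ inferInstance h₂ int₂
  calc |(∫ x, (f x - Tay x) ∂μ₁) - ∫ x, (f x - Tay x) ∂μ₂|
      ≤ |∫ x, (f x - Tay x) ∂μ₁| + |∫ x, (f x - Tay x) ∂μ₂| := abs_sub _ _
    _ ≤ b + b := add_le_add h1 h2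
    _ = 2 / ((m+1).factorial : ℝ) * (d ^ (m+1) * M) := by
        rw [hbdef]; field_simp; ring


/-- **Refined (weighted) recombination error bound over a patch division** (Statement 6).
Let `U_1, …, U_l` be pairwise disjoint nonempty finite subsets of `ℝ^N` and let `ν` be a
probability measure whose support equals `U_1 ∪ … ∪ U_l`.  For each patch `U_k` of
positive weight, let `ν'_k` be a probability measure supported in `U_k` matching the
conditional measure `ν|_{U_k} = ν(U_k)⁻¹ ν.restrict U_k` on all polynomials of total
degree at most `m`, and let `μ = Σ_k ν(U_k) ν'_k` be the recombined measure.  Then for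
every `(m+1)`-times continuously differentiable `f : ℝ^N → ℝ`,
`|∫ f dν − ∫ f dμ| ≤ (2/(m+1)!) Σ_k ν(U_k) rad(U_k)^(m+1) sup_{conv U_k} ‖D^{m+1} f‖`. -/
theorem weighted_recombination_error
    (N m l : ℕ) (hN : 1 ≤ N) (hl : 1 ≤ l)
    (U : Fin l → Finset (EuclideanSpace ℝ (Fin N)))
    (hUne : ∀ k, (U k).Nonempty)
    (hdisj : ∀ j k, j ≠ k → Disjoint (U j) (U k))
    (ν : Measure (EuclideanSpace ℝ (Fin N))) [IsProbabilityMeasure ν]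
    (hsupp : ν (⋃ k, (↑(U k) : Set (EuclideanSpace ℝ (Fin N))))ᶜ = 0)
    (hfull : ∀ p ∈ ⋃ k, (↑(U k) : Set (EuclideanSpace ℝ (Fin N))), 0 < ν {p})
    (ν' : Fin l → Measure (EuclideanSpace ℝ (Fin N)))
    (hprob : ∀ k, 0 < ν ↑(U k) → IsProbabilityMeasure (ν' k))
    (hsub : ∀ k, 0 < ν ↑(U k) → ν' k (↑(U k) : Set (EuclideanSpace ℝ (Fin N)))ᶜ = 0)
    (hmatch : ∀ k, 0 < ν ↑(U k) → ∀ P : MvPolynomial (Fin N) ℝ, P.totalDegree ≤ m →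
      ∫ x, MvPolynomial.eval (fun i => x i) P ∂(ν' k)
        = ∫ x, MvPolynomial.eval (fun i => x i) P
            ∂((ν ↑(U k))⁻¹ • ν.restrict ↑(U k)))
    (f : EuclideanSpace ℝ (Fin N) → ℝ) (hf : ContDiff ℝ (↑(m + 1)) f) :
    |(∫ x, f x ∂ν) - ∫ x, f x ∂(∑ k, ν ↑(U k) • ν' k)|
      ≤ 2 / (Nat.factorial (m + 1) : ℝ) *
        ∑ k, (ν ↑(U k)).toReal
          * Metric.diam (↑(U k) : Set (EuclideanSpace ℝ (Fin N))) ^ (m + 1)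
          * ⨆ z ∈ convexHull ℝ (↑(U k) : Set (EuclideanSpace ℝ (Fin N))),
              ‖iteratedFDeriv ℝ (m + 1) f z‖ := by
  classical
  have hmeas : ∀ k, MeasurableSet (↑(U k) : Set (EuclideanSpace ℝ (Fin N))) :=
    fun k => (U k).finite_toSet.measurableSet
  have hw_top : ∀ k, ν ↑(U k) ≠ ⊤ := fun k => measure_ne_top ν _
  have hν : ν = ∑ k, ν.restrict ↑(U k) := by
    have h1 : ν.restrict (⋃ k, (↑(U k) : Set (EuclideanSpace ℝ (Fin N)))) = ν := by
      apply Measure.restrict_eq_self_of_ae_mem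
      rw [ae_iff]
      exact hsupp
    conv_lhs => rw [← h1]
    rw [Measure.restrict_iUnion
      (fun j k hjk => Finset.disjoint_coe.mpr (hdisj j k hjk)) hmeas, Measure.sum_fintype]
  have hrestr_null : ∀ k,
      (ν.restrict ↑(U k)) (↑(U k) : Set (EuclideanSpace ℝ (Fin N)))ᶜ = 0 := by
    intro k; rw [Measure.restrict_apply (hmeas k).compl]; simp
  have hint_res : ∀ (h : EuclideanSpace ℝ (Fin N) → ℝ) k,
      Integrable h (ν.restrict ↑(U k)) := fun h k => integrable_of_null_compl (hrestr_null k) h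
  have hIμ : ∀ k, Integrable f (ν ↑(U k) • ν' k) := by
    intro k
    rcases eq_or_ne (ν ↑(U k)) 0 with h0 | h0
    · rw [h0, zero_smul]; exact integrable_zero_measure
    · have hpos : 0 < ν ↑(U k) := pos_iff_ne_zero.mpr h0
      haveI := hprob k hpos
      exact (integrable_of_null_compl (hsub k hpos) f).smul_measure (hw_top k)
  have hL : ∫ x, f x ∂ν = ∑ k, ∫ x, f x ∂(ν.restrict ↑(U k)) := by
    conv_lhs => rw [hν]
    exact integral_finset_sum_measure (fun k _ => hint_res f k)
  have hR : ∫ x, f x ∂(∑ k, ν ↑(U k) • ν' k) = ∑ k, ∫ x, f x ∂(ν ↑(U k) • ν' k) :=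
    integral_finset_sum_measure (fun k _ => hIμ k)
  rw [hL, hR, ← Finset.sum_sub_distrib]
  refine le_trans (Finset.abs_sum_le_sum_abs _ _) ?_
  rw [Finset.mul_sum]
  refine Finset.sum_le_sum fun k _ => ?_
  rcases eq_or_ne (ν ↑(U k)) 0 with h0 | h0
  · have hres0 : ν.restrict (↑(U k) : Set (EuclideanSpace ℝ (Fin N))) = 0 :=
      Measure.restrict_eq_zero.mpr h0
    rw [hres0, h0, zero_smul]
    simp [h0]
  · have hpos : 0 < ν ↑(U k) := pos_iff_ne_zero.mpr h0
    haveI hpk := hprob k hpos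
    set cond : Measure (EuclideanSpace ℝ (Fin N)) := (ν ↑(U k))⁻¹ • ν.restrict ↑(U k)
      with hcond
    haveI hcondprob : IsProbabilityMeasure cond := by
      constructor
      rw [hcond, Measure.smul_apply, Measure.restrict_apply_univ, smul_eq_mul,
        ENNReal.inv_mul_cancel h0 (hw_top k)]
    have hcond_null : cond (↑(U k) : Set (EuclideanSpace ℝ (Fin N)))ᶜ = 0 := by
      rw [hcond, Measure.smul_apply, hrestr_null k]
      simp
    have hest := patch_est N m (U k) (hUne k) f hf (ν' k) cond (hsub k hpos) hcond_null
      (fun P hP => hmatch k hpos P hP)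
    have hres_int : ∫ x, f x ∂(ν.restrict ↑(U k)) = (ν ↑(U k)).toReal * ∫ x, f x ∂cond := by
      rw [hcond, integral_smul_measure, ENNReal.toReal_inv, smul_eq_mul, ← mul_assoc,
        mul_inv_cancel₀ (ENNReal.toReal_ne_zero.mpr ⟨h0, hw_top k⟩), one_mul]
    have hsm : ∫ x, f x ∂(ν ↑(U k) • ν' k) = (ν ↑(U k)).toReal * ∫ x, f x ∂(ν' k) := by
      rw [integral_smul_measure, smul_eq_mul]
    rw [hres_int, hsm, ← mul_sub, abs_mul, abs_of_nonneg ENNReal.toReal_nonneg, abs_sub_comm]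
    calc (ν ↑(U k)).toReal * |(∫ x, f x ∂(ν' k)) - ∫ x, f x ∂cond|
        ≤ (ν ↑(U k)).toReal * (2 / ((m+1).factorial : ℝ) *
            (Metric.diam (↑(U k) : Set (EuclideanSpace ℝ (Fin N))) ^ (m+1) *
              ⨆ z ∈ convexHull ℝ (↑(U k) : Set (EuclideanSpace ℝ (Fin N))),
                ‖iteratedFDeriv ℝ (m + 1) f z‖)) :=
          mul_le_mul_of_nonneg_left hest ENNReal.toReal_nonneg
      _ = 2 / (Nat.factorial (m + 1) : ℝ) * ((ν ↑(U k)).toReal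
            * Metric.diam (↑(U k) : Set (EuclideanSpace ℝ (Fin N))) ^ (m + 1)
            * ⨆ z ∈ convexHull ℝ (↑(U k) : Set (EuclideanSpace ℝ (Fin N))),
                ‖iteratedFDeriv ℝ (m + 1) f z‖) := by ring
end

section
/- Let T > 0, let m ≥ 2 be an integer, and let γ > m be a real number. For each integer n ≥ 2 define the partition t_i = T (1 − (1 − i/n)^γ) of [0, T] for i = 0, 1, …, n, and set s_i = t_i − t_{i−1}. Then there exists a constant C > 0, depending only on T, m and γ, such that for every n ≥ 2, s_n^{1/2} + Σ_{i=1}^{n−1} Σ_{j=m}^{m+1} s_i^{(j+1)/2} / (T − t_i)^{j/2} ≤ C n^{−(m−1)/2}. -/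
set_option maxHeartbeats 1000000

open Real Finset

/-- MVT-type bound: `a^γ - b^γ ≤ γ * a^(γ-1) * (a-b)` for `0 ≤ b ≤ a`, `1 ≤ γ`. -/
lemma rpow_sub_rpow_le (a b γ : ℝ) (hb : 0 ≤ b) (hab : b ≤ a) (hγ : 1 ≤ γ) :
    a ^ γ - b ^ γ ≤ γ * a ^ (γ - 1) * (a - b) := by
  have ha : 0 ≤ a := hb.trans hab
  rcases eq_or_lt_of_le ha with h | ha'
  · have hb0 : b = 0 := le_antisymm (hab.trans h.symm.le) hb
    simp [← h, hb0, Real.zero_rpow (by linarith : γ ≠ 0)]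
  have hx : -1 ≤ b / a - 1 := by
    have : 0 ≤ b / a := div_nonneg hb ha
    linarith
  have key : 1 + γ * (b / a - 1) ≤ (1 + (b / a - 1)) ^ γ :=
    one_add_mul_self_le_rpow_one_add hx hγ
  rw [add_sub_cancel] at key
  rw [Real.div_rpow hb ha γ] at key
  have haγ : 0 < a ^ γ := Real.rpow_pos_of_pos ha' γ
  have h2 : (1 + γ * (b / a - 1)) * a ^ γ ≤ b ^ γ := (le_div_iff₀ haγ).mp key
  have h3 : a ^ (γ - 1) * a = a ^ γ := by
    rw [← Real.rpow_add_one ha'.ne' (γ - 1)]; ring_nf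
  have h5 : (b / a - 1) * a ^ γ = (b - a) * a ^ (γ - 1) := by
    rw [← h3]; field_simp
  nlinarith [h2]

/-- For `a ≥ 1` and `0 < p ≤ 1`: `p * a^(p-1) ≤ a^p - (a-1)^p`. -/
lemma le_rpow_sub_rpow (a : ℝ) (ha : 1 ≤ a) (p : ℝ) (hp0 : 0 < p) (hp1 : p ≤ 1) :
    p * a ^ (p - 1) ≤ a ^ p - (a - 1) ^ p := by
  have ha0 : 0 < a := lt_of_lt_of_le one_pos ha
  have hs : -1 ≤ -(1 / a) := by
    rw [neg_le_neg_iff]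
    exact div_le_one_of_le₀ ha (by positivity)
  have key : (1 + -(1 / a)) ^ p ≤ 1 + p * -(1 / a) :=
    rpow_one_add_le_one_add_mul_self hs hp0.le hp1
  have hnn : (0:ℝ) ≤ 1 + -(1 / a) := by
    have := (div_le_one_of_le₀ ha (by positivity : (0:ℝ) ≤ a)); linarith
  have he : a - 1 = a * (1 + -(1 / a)) := by field_simp; ring
  have h1 : (a - 1) ^ p = a ^ p * (1 + -(1 / a)) ^ p := by
    rw [he, Real.mul_rpow ha0.le hnn]
  have hap : 0 < a ^ p := Real.rpow_pos_of_pos ha0 p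
  have h3 : a ^ (p - 1) * a = a ^ p := by
    rw [← Real.rpow_add_one ha0.ne' (p - 1)]; ring_nf
  have h4 : a ^ p * (p * (1 / a)) = p * a ^ (p - 1) := by
    rw [← h3]; field_simp
  nlinarith [mul_le_mul_of_nonneg_left key hap.le]

lemma sum_rpow_le (N : ℕ) (β : ℝ) (hβ : -1 < β) :
    ∑ k ∈ Finset.Icc 1 N, (k : ℝ) ^ β ≤ (1 + 1 / (β + 1)) * (N : ℝ) ^ (β + 1) := by
  have hp : 0 < β + 1 := by linarith
  have hfac : (1:ℝ) ≤ 1 + 1 / (β + 1) := by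
    have : 0 < 1 / (β + 1) := by positivity
    linarith
  rcases Nat.eq_zero_or_pos N with rfl | hN
  · simp [Real.zero_rpow hp.ne']
  have hN1 : (1:ℝ) ≤ (N:ℝ) := by exact_mod_cast hN
  have hNpos : (0:ℝ) < N := by linarith
  have hrpos : (0:ℝ) < (N:ℝ) ^ (β + 1) := Real.rpow_pos_of_pos hNpos _
  rcases le_or_gt 0 β with hβ0 | hβ0
  · -- β ≥ 0 : each term ≤ N^β
    have h1 : ∑ k ∈ Finset.Icc 1 N, (k : ℝ) ^ β ≤ ∑ _k ∈ Finset.Icc 1 N, (N : ℝ) ^ β := by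
      apply Finset.sum_le_sum
      intro k hk
      have hk2 := (Finset.mem_Icc.mp hk).2
      exact Real.rpow_le_rpow (by positivity) (by exact_mod_cast hk2) hβ0
    rw [Finset.sum_const, Nat.card_Icc, Nat.add_sub_cancel, nsmul_eq_mul] at h1
    calc ∑ k ∈ Finset.Icc 1 N, (k : ℝ) ^ β ≤ (N:ℕ) * (N:ℝ) ^ β := h1
      _ = (N:ℝ) ^ (β + 1) := by rw [Real.rpow_add_one hNpos.ne']; ring
      _ ≤ (1 + 1 / (β + 1)) * (N : ℝ) ^ (β + 1) := le_mul_of_one_le_left hrpos.le hfac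
  · -- -1 < β < 0 : telescoping
    set p := β + 1 with hpdef
    have hp1 : p ≤ 1 := by simp [hpdef]; linarith
    have h1 : ∑ k ∈ Finset.Icc 1 N, (k : ℝ) ^ β ≤
        ∑ k ∈ Finset.Icc 1 N, ((k:ℝ) ^ p - ((k:ℝ) - 1) ^ p) / p := by
      apply Finset.sum_le_sum
      intro k hk
      have hk1 := (Finset.mem_Icc.mp hk).1
      have hk1' : (1:ℝ) ≤ (k:ℝ) := by exact_mod_cast hk1
      have := le_rpow_sub_rpow (k:ℝ) hk1' p hp hp1
      rw [le_div_iff₀ hp]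
      calc (k:ℝ) ^ β * p = p * (k:ℝ) ^ (p - 1) := by
            rw [hpdef]; ring_nf
        _ ≤ (k:ℝ) ^ p - ((k:ℝ) - 1) ^ p := this
    have h2 : ∑ k ∈ Finset.Icc 1 N, ((k:ℝ) ^ p - ((k:ℝ) - 1) ^ p) = (N:ℝ) ^ p := by
      rw [← Finset.Ico_add_one_right_eq_Icc, Finset.sum_Ico_eq_sum_range]
      have : ∀ i ∈ Finset.range (N + 1 - 1), ((1 + i : ℕ):ℝ) ^ p - (((1 + i : ℕ):ℝ) - 1) ^ p
          = ((i+1 : ℕ):ℝ) ^ p - ((i : ℕ):ℝ) ^ p := by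
        intro i _
        push_cast
        ring_nf
      rw [Finset.sum_congr rfl this, Finset.sum_range_sub (fun i => ((i:ℕ):ℝ) ^ p)]
      simp [Real.zero_rpow hp.ne']
    calc ∑ k ∈ Finset.Icc 1 N, (k : ℝ) ^ β
        ≤ ∑ k ∈ Finset.Icc 1 N, ((k:ℝ) ^ p - ((k:ℝ) - 1) ^ p) / p := h1
      _ = (∑ k ∈ Finset.Icc 1 N, ((k:ℝ) ^ p - ((k:ℝ) - 1) ^ p)) / p := by
          rw [Finset.sum_div]
      _ = (N:ℝ) ^ p / p := by rw [h2]
      _ ≤ (1 + 1 / p) * (N : ℝ) ^ p := by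
          rw [div_eq_mul_one_div, mul_comm]
          apply mul_le_mul_of_nonneg_right _ hrpos.le
          have : 0 < 1/p := by positivity
          linarith

lemma per_j_bound (T : ℝ) (hT : 0 < T) (γ : ℝ) (hγ1 : 1 ≤ γ) (j : ℕ)
    (hjγ : (j : ℝ) < γ + 1) (n : ℕ) (hn : 2 ≤ n) :
    ∑ i ∈ Finset.Icc 1 (n - 1),
      (T * (1 - (1 - (i : ℝ) / n) ^ γ) - T * (1 - (1 - ((i - 1 : ℕ) : ℝ) / n) ^ γ)) ^ (((j:ℝ) + 1) / 2)
        / (T - T * (1 - (1 - (i : ℝ) / n) ^ γ)) ^ ((j:ℝ) / 2)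
    ≤ ((T * γ * 2 ^ (γ - 1)) ^ (((j:ℝ) + 1) / 2) / T ^ ((j:ℝ) / 2)
        * (1 + 1 / ((γ - (j:ℝ) - 1) / 2 + 1))) * (n : ℝ) ^ ((1 - (j:ℝ)) / 2) := by
  have hn0 : (0:ℝ) < n := by positivity
  have hn1 : (1:ℝ) ≤ n := by exact_mod_cast Nat.one_le_iff_ne_zero.mpr (by omega)
  set q : ℝ := ((j:ℝ) + 1) / 2 with hq
  set r : ℝ := (j:ℝ) / 2 with hr
  set β : ℝ := (γ - (j:ℝ) - 1) / 2 with hβdef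
  have hq0 : 0 ≤ q := by positivity
  have hr0 : 0 ≤ r := by positivity
  have hβ : -1 < β := by rw [hβdef]; linarith
  set A : ℝ := T * γ * 2 ^ (γ - 1) with hA
  have hApos : 0 < A := by
    have : (0:ℝ) < 2 ^ (γ - 1) := Real.rpow_pos_of_pos two_pos _
    have hγ0 : (0:ℝ) < γ := by linarith
    positivity
  set B : ℝ := A ^ q / T ^ r with hB
  have hBpos : 0 < B := by
    have := Real.rpow_pos_of_pos hApos q
    have := Real.rpow_pos_of_pos hT r
    positivity
  -- Step 1: termwise bound
  have step1 : ∀ i ∈ Finset.Icc 1 (n - 1),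
      (T * (1 - (1 - (i : ℝ) / n) ^ γ) - T * (1 - (1 - ((i - 1 : ℕ) : ℝ) / n) ^ γ)) ^ q
        / (T - T * (1 - (1 - (i : ℝ) / n) ^ γ)) ^ r
      ≤ B * (1 - (i : ℝ) / n) ^ β * (n:ℝ) ^ (-q) := by
    intro i hi
    obtain ⟨hi1, hi2⟩ := Finset.mem_Icc.mp hi
    have hi1' : (1:ℝ) ≤ (i:ℝ) := by exact_mod_cast hi1
    have hin : (i:ℝ) ≤ (n:ℝ) - 1 := by
      have : (i:ℝ) ≤ ((n-1:ℕ):ℝ) := by exact_mod_cast hi2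
      rwa [Nat.cast_sub (by omega), Nat.cast_one] at this
    set u : ℝ := 1 - (i : ℝ) / n with hu
    have hu1 : 1 / (n:ℝ) ≤ u := by
      rw [hu]
      rw [le_sub_iff_add_le, ← add_div, div_le_one hn0]
      linarith
    have hupos : 0 < u := lt_of_lt_of_le (by positivity) hu1
    have hcast : ((i - 1 : ℕ) : ℝ) = (i:ℝ) - 1 := by
      rw [Nat.cast_sub hi1, Nat.cast_one]
    have hveq : 1 - ((i - 1 : ℕ) : ℝ) / n = u + 1 / n := by
      rw [hcast, hu]; field_simp; ring
    set v : ℝ := u + 1 / n with hv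
    have hninv : (0:ℝ) < 1 / n := by positivity
    have huv : u ≤ v := by rw [hv]; linarith
    have hv2u : v ≤ 2 * u := by rw [hv]; linarith
    have hsval : T * (1 - u ^ γ) - T * (1 - (1 - ((i - 1 : ℕ) : ℝ) / n) ^ γ)
        = T * (v ^ γ - u ^ γ) := by rw [hveq]; ring
    have hs_nonneg : 0 ≤ T * (v ^ γ - u ^ γ) := by
      have h := Real.rpow_le_rpow hupos.le huv (by linarith : (0:ℝ) ≤ γ)
      exact mul_nonneg hT.le (by linarith)
    have hs_le : T * (v ^ γ - u ^ γ) ≤ A * u ^ (γ - 1) / n := by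
      have h1 : v ^ γ - u ^ γ ≤ γ * v ^ (γ - 1) * (v - u) :=
        rpow_sub_rpow_le v u γ hupos.le huv hγ1
      have hvu : v - u = 1 / n := by rw [hv]; ring
      have h2 : v ^ (γ - 1) ≤ (2 * u) ^ (γ - 1) :=
        Real.rpow_le_rpow (by positivity) hv2u (by linarith)
      have h3 : (2 * u) ^ (γ - 1) = 2 ^ (γ - 1) * u ^ (γ - 1) :=
        Real.mul_rpow (by norm_num) hupos.le
      have hγ0 : (0:ℝ) < γ := by linarith
      rw [hvu] at h1
      rw [h3] at h2
      have h4 : γ * v ^ (γ - 1) * (1/(n:ℝ)) ≤ γ * (2 ^ (γ - 1) * u ^ (γ - 1)) * (1/(n:ℝ)) :=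
        mul_le_mul_of_nonneg_right (mul_le_mul_of_nonneg_left h2 hγ0.le) (by positivity)
      calc T * (v ^ γ - u ^ γ) ≤ T * (γ * v ^ (γ - 1) * (1/(n:ℝ))) :=
            mul_le_mul_of_nonneg_left h1 hT.le
        _ ≤ T * (γ * (2 ^ (γ - 1) * u ^ (γ - 1)) * (1/(n:ℝ))) :=
            mul_le_mul_of_nonneg_left h4 hT.le
        _ = A * u ^ (γ - 1) / n := by rw [hA]; ring
    have hDval : T - T * (1 - u ^ γ) = T * u ^ γ := by ring
    have hDpos : 0 < T * u ^ γ := by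
      have := Real.rpow_pos_of_pos hupos γ
      positivity
    have hDrpos : 0 < (T * u ^ γ) ^ r := Real.rpow_pos_of_pos hDpos r
    rw [hsval, hDval]
    have hnum : (T * (v ^ γ - u ^ γ)) ^ q ≤ (A * u ^ (γ - 1) / n) ^ q :=
      Real.rpow_le_rpow hs_nonneg hs_le hq0
    have hchain : (T * (v ^ γ - u ^ γ)) ^ q / (T * u ^ γ) ^ r
        ≤ (A * u ^ (γ - 1) / n) ^ q / (T * u ^ γ) ^ r := by
      gcongr
    refine hchain.trans (le_of_eq ?_)
    -- algebraic identity
    have hu1' : 0 < u ^ (γ - 1) := Real.rpow_pos_of_pos hupos _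
    have e1 : (A * u ^ (γ - 1) / n) ^ q = A ^ q * u ^ ((γ-1)*q) / (n:ℝ) ^ q := by
      rw [Real.div_rpow (by positivity) hn0.le, Real.mul_rpow hApos.le hu1'.le,
        Real.rpow_mul hupos.le]
    have e2 : (T * u ^ γ) ^ r = T ^ r * u ^ (γ*r) := by
      rw [Real.mul_rpow hT.le (Real.rpow_pos_of_pos hupos γ).le, ← Real.rpow_mul hupos.le]
    rw [e1, e2]
    have hexp : (γ-1)*q = β + γ*r := by rw [hβdef, hq, hr]; ring
    rw [hexp, Real.rpow_add hupos, Real.rpow_neg hn0.le]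
    have hTr : (0:ℝ) < T ^ r := Real.rpow_pos_of_pos hT r
    have hnq : (0:ℝ) < (n:ℝ) ^ q := Real.rpow_pos_of_pos hn0 q
    have hugr : (0:ℝ) < u ^ (γ*r) := Real.rpow_pos_of_pos hupos _
    rw [hB]
    field_simp
  -- Step 2: sum the bound
  have step2 : ∑ i ∈ Finset.Icc 1 (n-1), (1 - (i : ℝ) / n) ^ β
      ≤ (1 + 1 / (β + 1)) * (n:ℝ) := by
    have hre : ∀ i ∈ Finset.Icc 1 (n-1), (1 - (i : ℝ) / n) ^ β = (((n - i : ℕ):ℝ) / n) ^ β := by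
      intro i hi
      obtain ⟨hi1, hi2⟩ := Finset.mem_Icc.mp hi
      congr 1
      rw [Nat.cast_sub (by omega)]
      field_simp
    rw [Finset.sum_congr rfl hre]
    have hbij : ∑ i ∈ Finset.Icc 1 (n-1), (((n - i : ℕ):ℝ) / n) ^ β
        = ∑ k ∈ Finset.Icc 1 (n-1), (((k : ℕ):ℝ) / n) ^ β := by
      apply Finset.sum_nbij' (fun i => n - i) (fun k => n - k)
      · intro a ha; simp only [Finset.mem_Icc] at *; omega
      · intro a ha; simp only [Finset.mem_Icc] at *; omega
      · intro a ha; simp only [Finset.mem_Icc] at *; omega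
      · intro a ha; simp only [Finset.mem_Icc] at *; omega
      · intro a ha; rfl
    rw [hbij]
    have hdiv : ∀ k ∈ Finset.Icc 1 (n-1), (((k : ℕ):ℝ) / n) ^ β = (k:ℝ) ^ β / (n:ℝ) ^ β :=
      fun k _ => Real.div_rpow (by positivity) hn0.le β
    rw [Finset.sum_congr rfl hdiv, ← Finset.sum_div]
    have hsum := sum_rpow_le (n-1) β hβ
    have hmono : ((n-1:ℕ):ℝ) ^ (β+1) ≤ (n:ℝ) ^ (β+1) := by
      apply Real.rpow_le_rpow (by positivity) (by exact_mod_cast Nat.sub_le n 1) (by linarith)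
    have hfacpos : (0:ℝ) < 1 + 1/(β+1) := by
      have : (0:ℝ) < 1/(β+1) := one_div_pos.mpr (by linarith)
      linarith
    have hnβ : (0:ℝ) < (n:ℝ) ^ β := Real.rpow_pos_of_pos hn0 β
    rw [div_le_iff₀ hnβ]
    calc ∑ k ∈ Finset.Icc 1 (n-1), (k:ℝ) ^ β
        ≤ (1 + 1/(β+1)) * ((n-1:ℕ):ℝ) ^ (β+1) := hsum
      _ ≤ (1 + 1/(β+1)) * (n:ℝ) ^ (β+1) := by nlinarith
      _ = (1 + 1/(β+1)) * (n:ℝ) * (n:ℝ) ^ β := by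
          rw [Real.rpow_add_one hn0.ne']; ring
  -- Combine
  calc ∑ i ∈ Finset.Icc 1 (n - 1),
      (T * (1 - (1 - (i : ℝ) / n) ^ γ) - T * (1 - (1 - ((i - 1 : ℕ) : ℝ) / n) ^ γ)) ^ q
        / (T - T * (1 - (1 - (i : ℝ) / n) ^ γ)) ^ r
      ≤ ∑ i ∈ Finset.Icc 1 (n-1), B * (1 - (i : ℝ) / n) ^ β * (n:ℝ) ^ (-q) :=
        Finset.sum_le_sum step1
    _ = B * (n:ℝ) ^ (-q) * ∑ i ∈ Finset.Icc 1 (n-1), (1 - (i : ℝ) / n) ^ β := by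
        rw [Finset.mul_sum]; apply Finset.sum_congr rfl; intro i _; ring
    _ ≤ B * (n:ℝ) ^ (-q) * ((1 + 1 / (β + 1)) * (n:ℝ)) := by
        have hnegq : (0:ℝ) < (n:ℝ) ^ (-q) := Real.rpow_pos_of_pos hn0 _
        have : (0:ℝ) ≤ B * (n:ℝ) ^ (-q) := by positivity
        exact mul_le_mul_of_nonneg_left step2 this
    _ = (B * (1 + 1 / (β + 1))) * ((n:ℝ) * (n:ℝ) ^ (-q)) := by ring
    _ = (B * (1 + 1 / (β + 1))) * (n:ℝ) ^ ((1 - (j:ℝ)) / 2) := by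
        congr 1
        rw [show (1 - (j:ℝ))/2 = 1 + -q by rw [hq]; ring, Real.rpow_add hn0, Real.rpow_one]


/-- **Discretisation-error sum for the Kusuoka-type partition** (Statement 11).
For `T > 0`, an integer `m ≥ 2` and a real `γ > m`, consider for each `n ≥ 2` the
partition `t_i = T(1 − (1 − i/n)^γ)` of `[0, T]` with steps `s_i = t_i − t_{i−1}`.
Then there is a constant `C > 0`, depending only on `T`, `m` and `γ`, such that for all
`n ≥ 2`,
`s_n^{1/2} + Σ_{i=1}^{n−1} Σ_{j=m}^{m+1} s_i^{(j+1)/2}/(T − t_i)^{j/2} ≤ C n^{−(m−1)/2}`. -/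
theorem kusuoka_partition_error_bound
    (T : ℝ) (hT : 0 < T) (m : ℕ) (hm : 2 ≤ m) (γ : ℝ) (hγ : (m : ℝ) < γ) :
    ∃ C : ℝ, 0 < C ∧ ∀ n : ℕ, 2 ≤ n →
      (fun t : ℕ → ℝ => (fun s : ℕ → ℝ =>
          s n ^ ((1 : ℝ) / 2) +
            ∑ i ∈ Finset.Icc 1 (n - 1), ∑ j ∈ Finset.Icc m (m + 1),
              s i ^ (((j : ℝ) + 1) / 2) / (T - t i) ^ ((j : ℝ) / 2))
        (fun i => t i - t (i - 1)))
        (fun i => T * (1 - (1 - (i : ℝ) / (n : ℝ)) ^ γ))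
        ≤ C * (n : ℝ) ^ (-((m : ℝ) - 1) / 2) := by
  have hm1 : (1:ℝ) ≤ (m:ℝ) := by exact_mod_cast Nat.one_le_of_lt hm
  have hγ1 : 1 ≤ γ := by linarith
  set E : ℕ → ℝ := fun j => (T * γ * 2 ^ (γ - 1)) ^ (((j:ℝ) + 1) / 2) / T ^ ((j:ℝ) / 2)
      * (1 + 1 / ((γ - (j:ℝ) - 1) / 2 + 1)) with hE
  have hEnn : ∀ j ∈ Finset.Icc m (m + 1), 0 ≤ E j := by
    intro j hj
    obtain ⟨_, hj2⟩ := Finset.mem_Icc.mp hj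
    have hj2' : (j:ℝ) ≤ (m:ℝ) + 1 := by exact_mod_cast hj2
    have hApos : (0:ℝ) < T * γ * 2 ^ (γ - 1) := by
      have : (0:ℝ) < 2 ^ (γ - 1) := Real.rpow_pos_of_pos two_pos _
      have hγ0 : (0:ℝ) < γ := by linarith
      positivity
    have h1 : (0:ℝ) < (T * γ * 2 ^ (γ - 1)) ^ (((j:ℝ) + 1) / 2) := Real.rpow_pos_of_pos hApos _
    have h2 : (0:ℝ) < T ^ ((j:ℝ) / 2) := Real.rpow_pos_of_pos hT _
    have h3 : (0:ℝ) < (γ - (j:ℝ) - 1) / 2 + 1 := by linarith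
    have h4 : (0:ℝ) < 1 + 1 / ((γ - (j:ℝ) - 1) / 2 + 1) := by
      have := one_div_pos.mpr h3; linarith
    rw [hE]
    positivity
  refine ⟨T ^ ((1:ℝ)/2) + ∑ j ∈ Finset.Icc m (m + 1), E j, ?_, ?_⟩
  · have h1 : (0:ℝ) < T ^ ((1:ℝ)/2) := Real.rpow_pos_of_pos hT _
    have h2 : 0 ≤ ∑ j ∈ Finset.Icc m (m + 1), E j := Finset.sum_nonneg hEnn
    linarith
  intro n hn
  simp only
  have hn0 : (0:ℝ) < n := by positivity
  have hn1 : (1:ℝ) ≤ n := by exact_mod_cast Nat.one_le_of_lt hn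
  set X : ℝ := (n : ℝ) ^ (-((m : ℝ) - 1) / 2) with hX
  have hXpos : 0 < X := Real.rpow_pos_of_pos hn0 _
  -- first term
  have hfirst : (T * (1 - (1 - (n : ℝ) / n) ^ γ) - T * (1 - (1 - ((n - 1 : ℕ) : ℝ) / n) ^ γ))
      ^ ((1:ℝ)/2) ≤ T ^ ((1:ℝ)/2) * X := by
    have e0 : 1 - (n:ℝ)/n = 0 := by field_simp; ring
    have e1 : (1 - (n:ℝ)/n) ^ γ = 0 := by
      rw [e0, Real.zero_rpow (by linarith : γ ≠ 0)]
    have e2 : 1 - ((n - 1 : ℕ) : ℝ) / n = 1 / n := by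
      rw [Nat.cast_sub (by omega), Nat.cast_one]; field_simp; ring
    have e3 : T * (1 - (1 - (n : ℝ) / n) ^ γ) - T * (1 - (1 - ((n - 1 : ℕ) : ℝ) / n) ^ γ)
        = T * ((1:ℝ)/n) ^ γ := by rw [e1, e2]; ring
    rw [e3, Real.mul_rpow hT.le (Real.rpow_nonneg (by positivity) γ),
      ← Real.rpow_mul (by positivity : (0:ℝ) ≤ 1/(n:ℝ))]
    have e4 : ((1:ℝ)/(n:ℝ)) ^ (γ * ((1:ℝ)/2)) = (n:ℝ) ^ (-(γ * ((1:ℝ)/2))) := by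
      rw [Real.div_rpow zero_le_one hn0.le, Real.one_rpow, Real.rpow_neg hn0.le, one_div]
    rw [e4]
    apply mul_le_mul_of_nonneg_left _ (Real.rpow_nonneg hT.le _)
    rw [hX]
    apply Real.rpow_le_rpow_of_exponent_le hn1
    linarith
  -- double sum
  have hsum : ∑ i ∈ Finset.Icc 1 (n - 1), ∑ j ∈ Finset.Icc m (m + 1),
      (T * (1 - (1 - (i : ℝ) / n) ^ γ) - T * (1 - (1 - ((i - 1 : ℕ) : ℝ) / n) ^ γ))
        ^ (((j:ℝ) + 1) / 2) / (T - T * (1 - (1 - (i : ℝ) / n) ^ γ)) ^ ((j:ℝ) / 2)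
      ≤ (∑ j ∈ Finset.Icc m (m + 1), E j) * X := by
    rw [Finset.sum_comm, Finset.sum_mul]
    apply Finset.sum_le_sum
    intro j hj
    obtain ⟨hj1, hj2⟩ := Finset.mem_Icc.mp hj
    have hj2' : (j:ℝ) ≤ (m:ℝ) + 1 := by exact_mod_cast hj2
    have hj1' : (m:ℝ) ≤ (j:ℝ) := by exact_mod_cast hj1
    have hstep := per_j_bound T hT γ hγ1 j (by linarith) n hn
    refine hstep.trans ?_
    have hEj : E j = (T * γ * 2 ^ (γ - 1)) ^ (((j:ℝ) + 1) / 2) / T ^ ((j:ℝ) / 2)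
        * (1 + 1 / ((γ - (j:ℝ) - 1) / 2 + 1)) := rfl
    rw [← hEj, hX]
    apply mul_le_mul_of_nonneg_left _ (hEnn j hj)
    apply Real.rpow_le_rpow_of_exponent_le hn1
    linarith
  calc (T * (1 - (1 - (n : ℝ) / n) ^ γ) - T * (1 - (1 - ((n - 1 : ℕ) : ℝ) / n) ^ γ))
      ^ ((1:ℝ)/2) + ∑ i ∈ Finset.Icc 1 (n - 1), ∑ j ∈ Finset.Icc m (m + 1),
      (T * (1 - (1 - (i : ℝ) / n) ^ γ) - T * (1 - (1 - ((i - 1 : ℕ) : ℝ) / n) ^ γ))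
        ^ (((j:ℝ) + 1) / 2) / (T - T * (1 - (1 - (i : ℝ) / n) ^ γ)) ^ ((j:ℝ) / 2)
      ≤ T ^ ((1:ℝ)/2) * X + (∑ j ∈ Finset.Icc m (m + 1), E j) * X := add_le_add hfirst hsum
    _ = (T ^ ((1:ℝ)/2) + ∑ j ∈ Finset.Icc m (m + 1), E j) * X := by ring
end

section
/- Let μ ∈ ℝ, α > 0, θ > 0, β ≠ 0 and ρ ∈ (−1, 1), and define the vector fields W_0, W_1, W_2 : ℝ³ → ℝ³ by W_0(y₁,y₂,y₃) = ( y₁(μ − y₂/2) − βρ y₁/4, α(θ − y₂) − β²/4, y₁ ), W_1(y₁,y₂,y₃) = ( y₁ √y₂, βρ √y₂, 0 ), W_2(y₁,y₂,y₃) = ( 0, β √(y₂(1 − ρ²)), 0 ), and define the Lie bracket [W_0, W_1](x) = DW_1(x) W_0(x) − DW_0(x) W_1(x), where DW_i(x) is the Jacobian matrix of W_i at x. Then for every x = (y₁, y₂, y₃) with y₁ > 0, y₂ > 0 and y₃ > 0, the three vectors W_1(x), W_2(x), [W_0, W_1](x) are linearly independent, i.e., they span ℝ³. -/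
/-- The drift Stratonovich vector field `W₀` of the Heston model. -/
noncomputable def hestonW0 (μ α θ β ρ : ℝ) : (Fin 3 → ℝ) → (Fin 3 → ℝ) := fun y =>
  ![y 0 * (μ - y 1 / 2) - β * ρ * y 0 / 4, α * (θ - y 1) - β ^ 2 / 4, y 0]

/-- The first diffusion vector field `W₁` of the Heston model. -/
noncomputable def hestonW1 (β ρ : ℝ) : (Fin 3 → ℝ) → (Fin 3 → ℝ) := fun y =>
  ![y 0 * Real.sqrt (y 1), β * ρ * Real.sqrt (y 1), 0]

/-- The second diffusion vector field `W₂` of the Heston model. -/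
noncomputable def hestonW2 (β ρ : ℝ) : (Fin 3 → ℝ) → (Fin 3 → ℝ) := fun y =>
  ![0, β * Real.sqrt (y 1 * (1 - ρ ^ 2)), 0]

/-- The Lie bracket `[V, W](x) = DW(x) V(x) − DV(x) W(x)` of vector fields on `ℝ³`,
where `D` denotes the (Fréchet) Jacobian. -/
noncomputable def lieBracketVF (V W : (Fin 3 → ℝ) → (Fin 3 → ℝ)) :
    (Fin 3 → ℝ) → (Fin 3 → ℝ) := fun x =>
  fderiv ℝ W x (V x) - fderiv ℝ V x (W x)

lemma fderiv_eval3 {f : (Fin 3 → ℝ) → (Fin 3 → ℝ)} {x v : Fin 3 → ℝ}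
    (hf : ∀ i, DifferentiableAt ℝ (fun y => f y i) x) (i : Fin 3) :
    (fderiv ℝ f x v) i = fderiv ℝ (fun y => f y i) x v := by
  have h := fderiv_pi (𝕜 := ℝ) (φ := fun i y => f y i) (x := x) hf
  rw [show f = (fun y i => f y i) from rfl, h, ContinuousLinearMap.pi_apply]

lemma fderiv_proj0 (x v : Fin 3 → ℝ) : fderiv ℝ (fun y : Fin 3 → ℝ => y 0) x v = v 0 := by
  rw [show (fun y : Fin 3 → ℝ => y 0)
      = ⇑(ContinuousLinearMap.proj (R := ℝ) (φ := fun _ : Fin 3 => ℝ) 0) from rfl,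
    ContinuousLinearMap.fderiv]
  rfl

lemma heston_bracket_two (μ α θ β ρ : ℝ) (x : Fin 3 → ℝ) (hx1 : 0 < x 1) :
    lieBracketVF (hestonW0 μ α θ β ρ) (hestonW1 β ρ) x 2 = -(x 0 * Real.sqrt (x 1)) := by
  have hsq : DifferentiableAt ℝ (fun y : Fin 3 → ℝ => Real.sqrt (y 1)) x :=
    (differentiableAt_apply (𝕜 := ℝ) 1 x).sqrt hx1.ne'
  have hW0 : ∀ i, DifferentiableAt ℝ (fun y => hestonW0 μ α θ β ρ y i) x := by
    intro i
    fin_cases i <;> simp only [hestonW0, Fin.zero_eta, Fin.mk_one, Fin.reduceFinMk,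
      Matrix.cons_val_zero, Matrix.cons_val_one, Matrix.head_cons, Matrix.cons_val_two,
      Matrix.tail_cons] <;> fun_prop
  have hW1 : ∀ i, DifferentiableAt ℝ (fun y => hestonW1 β ρ y i) x := by
    intro i
    fin_cases i <;> simp only [hestonW1, Fin.zero_eta, Fin.mk_one, Fin.reduceFinMk,
      Matrix.cons_val_zero, Matrix.cons_val_one, Matrix.head_cons, Matrix.cons_val_two,
      Matrix.tail_cons]
    · exact (differentiableAt_apply (𝕜 := ℝ) 0 x).mul hsq
    · exact hsq.const_mul _
    · exact differentiableAt_const _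
  show (fderiv ℝ (hestonW1 β ρ) x (hestonW0 μ α θ β ρ x)
      - fderiv ℝ (hestonW0 μ α θ β ρ) x (hestonW1 β ρ x)) 2 = _
  rw [Pi.sub_apply, fderiv_eval3 hW1 2, fderiv_eval3 hW0 2]
  have e1 : (fun y : Fin 3 → ℝ => hestonW1 β ρ y 2) = fun _ => (0 : ℝ) := by
    funext y; simp [hestonW1]
  have e2 : (fun y : Fin 3 → ℝ => hestonW0 μ α θ β ρ y 2) = fun y => y 0 := by
    funext y; simp [hestonW0]
  rw [e1, e2, fderiv_fun_const, fderiv_proj0]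
  simp [hestonW1]

/-- **Hörmander-type nondegeneracy of the Heston vector fields on the positive octant**
(Statement 14).  For any parameters `μ ∈ ℝ`, `α > 0`, `θ > 0`, `β ≠ 0`, `ρ ∈ (−1, 1)`
and any point `x = (y₁, y₂, y₃)` with `y₁, y₂, y₃ > 0`, the vectors
`W₁(x), W₂(x), [W₀, W₁](x)` are linearly independent, i.e. they span `ℝ³`. -/
theorem heston_spanning
    (μ α θ β ρ : ℝ) (hα : 0 < α) (hθ : 0 < θ) (hβ : β ≠ 0)
    (hρ₁ : -1 < ρ) (hρ₂ : ρ < 1)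
    (x : Fin 3 → ℝ) (hx0 : 0 < x 0) (hx1 : 0 < x 1) (hx2 : 0 < x 2) :
    LinearIndependent ℝ
      ![hestonW1 β ρ x, hestonW2 β ρ x,
        lieBracketVF (hestonW0 μ α θ β ρ) (hestonW1 β ρ) x] ∧
    Submodule.span ℝ
      ({hestonW1 β ρ x, hestonW2 β ρ x,
        lieBracketVF (hestonW0 μ α θ β ρ) (hestonW1 β ρ) x} : Set (Fin 3 → ℝ)) = ⊤ := by
  have hb2 := heston_bracket_two μ α θ β ρ x hx1
  have hs : 0 < Real.sqrt (x 1) := Real.sqrt_pos.mpr hx1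
  have hρsq : 0 < 1 - ρ ^ 2 := by nlinarith
  have hs2 : 0 < Real.sqrt (x 1 * (1 - ρ ^ 2)) :=
    Real.sqrt_pos.mpr (by positivity)
  have hu0 : hestonW1 β ρ x 0 = x 0 * Real.sqrt (x 1) := by simp [hestonW1]
  have hu2 : hestonW1 β ρ x 2 = 0 := by simp [hestonW1]
  have hw0 : hestonW2 β ρ x 0 = 0 := by simp [hestonW2]
  have hw1 : hestonW2 β ρ x 1 = β * Real.sqrt (x 1 * (1 - ρ ^ 2)) := by simp [hestonW2]
  have hw2 : hestonW2 β ρ x 2 = 0 := by simp [hestonW2]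
  have hli : LinearIndependent ℝ
      ![hestonW1 β ρ x, hestonW2 β ρ x,
        lieBracketVF (hestonW0 μ α θ β ρ) (hestonW1 β ρ) x] := by
    rw [Fintype.linearIndependent_iff]
    intro g hg
    simp only [Fin.sum_univ_three, Matrix.cons_val_zero, Matrix.cons_val_one,
      Matrix.head_cons, Matrix.cons_val_two, Matrix.tail_cons] at hg
    have h2 := congrFun hg 2
    simp only [Pi.add_apply, Pi.smul_apply, Pi.zero_apply, smul_eq_mul, hu2, hw2, hb2] at h2
    have hg2 : g 2 = 0 := by
      have : g 2 * -(x 0 * Real.sqrt (x 1)) = 0 := by linarith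
      rcases mul_eq_zero.mp this with h | h
      · exact h
      · exact absurd h (by nlinarith)
    have h0 := congrFun hg 0
    simp only [Pi.add_apply, Pi.smul_apply, Pi.zero_apply, smul_eq_mul, hu0, hw0, hg2,
      zero_mul, mul_zero, add_zero] at h0
    have hg0 : g 0 = 0 := by
      have : g 0 * (x 0 * Real.sqrt (x 1)) = 0 := by linarith
      rcases mul_eq_zero.mp this with h | h
      · exact h
      · exact absurd h (by nlinarith)
    have h1 := congrFun hg 1
    simp only [Pi.add_apply, Pi.smul_apply, Pi.zero_apply, smul_eq_mul, hw1, hg0, hg2,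
      zero_mul, mul_zero, add_zero, zero_add] at h1
    have hg1 : g 1 = 0 := by
      have : g 1 * (β * Real.sqrt (x 1 * (1 - ρ ^ 2))) = 0 := by linarith
      rcases mul_eq_zero.mp this with h | h
      · exact h
      · exact absurd h (by positivity)
    intro i; fin_cases i <;> assumption
  refine ⟨hli, ?_⟩
  have hcard : Fintype.card (Fin 3) = Module.finrank ℝ (Fin 3 → ℝ) := by
    simp [Module.finrank_fin_fun]
  have hspan := hli.span_eq_top_of_card_eq_finrank hcard
  rw [show ({hestonW1 β ρ x, hestonW2 β ρ x,
      lieBracketVF (hestonW0 μ α θ β ρ) (hestonW1 β ρ) x} : Set (Fin 3 → ℝ))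
      = Set.range ![hestonW1 β ρ x, hestonW2 β ρ x,
        lieBracketVF (hestonW0 μ α θ β ρ) (hestonW1 β ρ) x] from by
    rw [Matrix.range_cons, Matrix.range_cons_cons_empty]
    ext z; simp; tauto]
  exact hspan
end
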